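/- arXiv:1110.0168 — 3 statements merged into one kernel-verified Lean document; each statement's English description precedes it below -/
import Mathlib

section
/- Fix real parameters (C_{j,i})_{i,j=1}^6 satisfying the one-sidedness condition C_{j,i} = 0 whenever i ∉ {j−1, j, j+1} (indices modulo 6). Then the reconstructed potential V^i(g) := V((Σ_{i=1}^6 C_{j,i} g_i)_{j=1}^6) satisfies the local energy consistency V^i(F𝐚) = V(F𝐚) for every F ∈ ℝ^{2×2} and every potential V ∈ 𝒱 if and only if C_{j,j−1} = C_{j,j+1} = 1 − C_{j,j} for all j = 1, …, 6 (indices modulo 6). -/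
open Real
open scoped BigOperators Classical ENNReal

noncomputable section

namespace AC

/-- The plane `ℝ²` with the Euclidean norm. -/
abbrev E2 := EuclideanSpace ℝ (Fin 2)

/-- `2 × 2` real matrices. -/
abbrev Mat2 := Matrix (Fin 2) (Fin 2) ℝ

def toE2 (v : Fin 2 → ℝ) : E2 := WithLp.toLp 2 v

/-- The lattice directions `a_j = Q6^(j-1) a_1`, `Q6` the rotation by `π/3`. -/
def avec (j : ℤ) : E2 :=
  toE2 ![Real.cos (((j : ℝ) - 1) * (Real.pi / 3)), Real.sin (((j : ℝ) - 1) * (Real.pi / 3))]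

/-- The volume `Ω₀ = √3/2` of a primitive cell. -/
def Om0 : ℝ := Real.sqrt 3 / 2

/-- `𝐚 = (a_1, …, a_6)`. -/
def aFam : Fin 6 → E2 := fun j => avec ((j : ℕ) + 1)

/-- Matrix-vector multiplication on `E2`. -/
def mvec (F : Mat2) (v : E2) : E2 := toE2 fun i => ∑ k, F i k * v k

/-- `F𝐚 = (F a_1, …, F a_6)`. -/
def Famat (F : Mat2) : Fin 6 → E2 := fun j => mvec F (aFam j)

/-- Lattice coordinates (w.r.t. the basis `a_1, a_2`) of `a_j` (indices mod 6). -/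
def ed (j : ℤ) : ℤ × ℤ :=
  match (j % 6).toNat with
  | 1 => (1, 0)
  | 2 => (0, 1)
  | 3 => (-1, 1)
  | 4 => (-1, 0)
  | 5 => (0, -1)
  | _ => (1, -1)

/-- The lattice point `n₁ a₁ + n₂ a₂`; `ℒ = emb '' (ℤ × ℤ)`. -/
def emb (n : ℤ × ℤ) : E2 := (n.1 : ℝ) • avec 1 + (n.2 : ℝ) • avec 2

/-- Forward finite difference `D_j v(x) = v(x + a_j) - v(x)` in lattice coordinates. -/
def Dd (j : ℤ) (v : ℤ × ℤ → E2) (n : ℤ × ℤ) : E2 := v (n + ed j) - v n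

/-- `Dv(x) = (D_1 v(x), …, D_6 v(x))`. -/
def Dfam (y : ℤ × ℤ → E2) (n : ℤ × ℤ) : Fin 6 → E2 := fun j => Dd ((j : ℕ) + 1) y n

/-- Euclidean dot product. -/
def dotE (v w : E2) : ℝ := ∑ i, v i * w i

/-- Frobenius inner product `A : B`. -/
def frobI (A B : Mat2) : ℝ := ∑ i, ∑ k, A i k * B i k

/-- Frobenius norm. -/
def frobN (A : Mat2) : ℝ := Real.sqrt (∑ i, ∑ k, (A i k) ^ 2)

/-- Outer product `v ⊗ w`. -/
def outer (v w : E2) : Mat2 := fun i k => v i * w k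

/-- The element of `(ℝ²)⁶` with `k`-th standard basis vector in slot `j` and `0` elsewhere. -/
def unitv (j : Fin 6) (k : Fin 2) : Fin 6 → E2 := fun i => if i = j then toE2 (Pi.single k 1) else 0

/-- Partial gradient `∂_j V(g) ∈ ℝ²` of `V` with respect to its `j`-th argument. -/
def pd (V : (Fin 6 → E2) → ℝ) (j : Fin 6) (g : Fin 6 → E2) : E2 :=
  toE2 fun k => deriv (fun t : ℝ => V (g + t • unitv j k)) 0

/-- Second partial derivative `∂_{ij} V(g) ∈ ℝ^{2×2}`. -/
def pd2 (V : (Fin 6 → E2) → ℝ) (i j : Fin 6) (g : Fin 6 → E2) : Mat2 :=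
  fun k l => deriv (fun t : ℝ => pd V j (g + t • unitv i k) l) 0

/-- Third partial derivative `∂_{ijk} V(g)`. -/
def pd3 (V : (Fin 6 → E2) → ℝ) (i j k : Fin 6) (g : Fin 6 → E2) : Fin 2 → Fin 2 → Fin 2 → ℝ :=
  fun p q r => deriv (fun t : ℝ => pd2 V j k (g + t • unitv i p) q r) 0

/-- Operator norm of a matrix viewed as a bilinear form on `ℝ²`. -/
def matOpNorm (A : Mat2) : ℝ :=
  sSup {r : ℝ | ∃ h1 h2 : E2, ‖h1‖ = 1 ∧ ‖h2‖ = 1 ∧ r = ∑ k, ∑ l, A k l * h1 k * h2 l}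

/-- Norm of a trilinear form on `ℝ²`. -/
def t3norm (B : Fin 2 → Fin 2 → Fin 2 → ℝ) : ℝ :=
  sSup {r : ℝ | ∃ h1 h2 h3 : E2, ‖h1‖ = 1 ∧ ‖h2‖ = 1 ∧ ‖h3‖ = 1 ∧
    r = ∑ p, ∑ q, ∑ s, B p q s * h1 p * h2 q * h3 s}

/-- `M₂ = Σ_{i,j} sup_g ‖∂_{ij}V(g)‖`. -/
def M2 (V : (Fin 6 → E2) → ℝ) : ℝ :=
  ∑ i : Fin 6, ∑ j : Fin 6, ⨆ g : Fin 6 → E2, matOpNorm (pd2 V i j g)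

/-- `M₃ = Σ_{i,j,k} sup_g ‖∂_{ijk}V(g)‖`. -/
def M3 (V : (Fin 6 → E2) → ℝ) : ℝ :=
  ∑ i : Fin 6, ∑ j : Fin 6, ∑ k : Fin 6, ⨆ g : Fin 6 → E2, t3norm (pd3 V i j k g)

/-- Finiteness of `M₂`. -/
def M2fin (V : (Fin 6 → E2) → ℝ) : Prop :=
  ∀ i j : Fin 6, BddAbove (Set.range fun g : Fin 6 → E2 => matOpNorm (pd2 V i j g))

/-- Finiteness of `M₃`. -/
def M3fin (V : (Fin 6 → E2) → ℝ) : Prop :=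
  ∀ i j k : Fin 6, BddAbove (Set.range fun g : Fin 6 → E2 => t3norm (pd3 V i j k g))

/-- The class `𝒱`: `C³` potentials with the point symmetry `V((-g_{j+3})_j) = V(g)`. -/
def memV (V : (Fin 6 → E2) → ℝ) : Prop :=
  ContDiff ℝ 3 V ∧ ∀ g : Fin 6 → E2, V (fun j => -g (j + 3)) = V g

/-- Cauchy–Born stored energy `W(F) = V(F𝐚)/Ω₀`. -/
def Wf (V : (Fin 6 → E2) → ℝ) (F : Mat2) : ℝ := V (Famat F) / Om0

/-- `∂W(F) ∈ ℝ^{2×2}`. -/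
def DW (V : (Fin 6 → E2) → ℝ) (F : Mat2) : Mat2 :=
  fun i k => deriv (fun t : ℝ => Wf V (F + t • Matrix.single i k 1)) 0

/-- The matrix `G` with `G b₁ = v₁`, `G b₂ = v₂` (for linearly independent `b₁, b₂`). -/
def solve2 (b1 b2 v1 v2 : E2) : Mat2 := fun i k =>
  (if k = 0 then v1 i * b2 1 - v2 i * b1 1 else v2 i * b1 0 - v1 i * b2 0) /
    (b1 0 * b2 1 - b1 1 * b2 0)

/-- Triangles of the canonical triangulation `𝒯`: `(n, true)` is the upward triangle
with vertices `n, n+a₁, n+a₂`, and `(n, false)` the downward triangle with vertices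
`n, n+a₁, n+a₆` (in lattice coordinates). -/
abbrev Tri := (ℤ × ℤ) × Bool

/-- The gradient `∂_T y` of the piecewise affine interpolant of `y` on `T`. -/
def triGrad (y : ℤ × ℤ → E2) (T : Tri) : Mat2 :=
  if T.2 then solve2 (avec 1) (avec 2) (Dd 1 y T.1) (Dd 2 y T.1)
  else solve2 (avec 1) (avec 6) (Dd 1 y T.1) (Dd 6 y T.1)

/-- The vertices `T ∩ ℒ` of a triangle, in lattice coordinates. -/
def triVerts (T : Tri) : Finset (ℤ × ℤ) :=
  if T.2 then {T.1, T.1 + (1, 0), T.1 + (0, 1)} else {T.1, T.1 + (1, 0), T.1 + (1, -1)}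

/-- `x_{T,j}`: the unique lattice point with `x_{T,j}, x_{T,j} + a_{j+1} ∈ T`
(here `j : Fin 6` labels the direction `a_{j+1}`). -/
def xT (T : Tri) (j : Fin 6) : ℤ × ℤ :=
  T.1 + (if T.2 then
    (match (j : ℕ) with
     | 0 => ((0 : ℤ), (0 : ℤ)) | 1 => (0, 0) | 2 => (1, 0) | 3 => (1, 0) | 4 => (0, 1) | _ => (0, 1))
  else
    (match (j : ℕ) with
     | 0 => ((0 : ℤ), (0 : ℤ)) | 1 => (1, -1) | 2 => (1, -1) | 3 => (1, 0) | 4 => (1, 0) | _ => (0, 0)))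

/-- The neighbouring triangle `T_j` of `T` sharing the edge with direction `a_{j+1}`. -/
def nbr (T : Tri) (j : Fin 6) : Tri :=
  if T.2 then
    (T.1 + (match (j : ℕ) % 3 with | 0 => ((0 : ℤ), (0 : ℤ)) | 1 => (-1, 1) | _ => (0, 1)), false)
  else
    (T.1 + (match (j : ℕ) % 3 with | 0 => ((0 : ℤ), (0 : ℤ)) | 1 => (1, -1) | _ => (0, -1)), true)

/-- The triangle `T_{x,j} = conv{x, x + a_j, x + a_{j+1}}` (index `j` mod 6). -/
def Txj (x : ℤ × ℤ) (j : ℤ) : Tri :=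
  match (j % 6).toNat with
  | 1 => (x, true)
  | 2 => (x + (-1, 1), false)
  | 3 => (x + (-1, 0), true)
  | 4 => (x + (-1, 0), false)
  | 5 => (x + (0, -1), true)
  | _ => (x, false)

/-- The Cauchy–Born site potential `V^c(g) = (Ω₀/6) Σ_j W(∂_{T_{x,j}} y)` as a function
of the six differences `g = Dy(x)`. -/
def Vc (V : (Fin 6 → E2) → ℝ) (g : Fin 6 → E2) : ℝ :=
  Om0 / 6 * ∑ j : Fin 6, Wf V (solve2 (avec ((j : ℕ) + 1)) (avec ((j : ℕ) + 2)) (g j) (g (j + 1)))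

/-- The atomistic stress `Σa(y;T)`. -/
def Sa (V : (Fin 6 → E2) → ℝ) (y : ℤ × ℤ → E2) (T : Tri) : Mat2 :=
  Om0⁻¹ • ∑ j : Fin 6, outer (pd V j (Dfam y (xT T j))) (aFam j)

/-- The continuum stress `Σc¹(y;T) = ∂W(∂_T y)`. -/
def Sc1 (V : (Fin 6 → E2) → ℝ) (y : ℤ × ℤ → E2) (T : Tri) : Mat2 := DW V (triGrad y T)

/-- The continuum stress `Σc²(y;T)`. -/
def Sc2 (V : (Fin 6 → E2) → ℝ) (y : ℤ × ℤ → E2) (T : Tri) : Mat2 :=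
  Om0⁻¹ • ∑ j : Fin 6, (2 : ℝ)⁻¹ •
    outer (pd V j (Famat (triGrad y T)) + pd V j (Famat (triGrad y (nbr T j)))) (aFam j)

/-- The continuum stress `Σc³(y;T)`. -/
def Sc3 (V : (Fin 6 → E2) → ℝ) (y : ℤ × ℤ → E2) (T : Tri) : Mat2 :=
  Om0⁻¹ • ∑ j : Fin 6, outer (pd (Vc V) j (Dfam y (xT T j))) (aFam j)

/-- The interface region `ℐ` determined by the atomistic region `𝒜`. -/
def interf (A : Set (ℤ × ℤ)) : Set (ℤ × ℤ) :=
  {x | x ∉ A ∧ ∃ j : Fin 6, x + ed ((j : ℕ) + 1) ∈ A}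

/-- The continuum region `𝒞 = ℒ ∖ (𝒜 ∪ ℐ)`. -/
def contR (A : Set (ℤ × ℤ)) : Set (ℤ × ℤ) := {x | x ∉ A ∧ x ∉ interf A}

/-- The reconstructed interface potential `V^i(g) = V((Σ_i C_{j,i} g_i)_j)`. -/
def Vi (V : (Fin 6 → E2) → ℝ) (Cp : Fin 6 → Fin 6 → ℝ) (g : Fin 6 → E2) : ℝ :=
  V fun j => ∑ i : Fin 6, Cp j i • g i

/-- The hybrid site potential `V^ac_x`. -/
def Vac (V : (Fin 6 → E2) → ℝ) (C : ℤ × ℤ → Fin 6 → Fin 6 → ℝ) (A : Set (ℤ × ℤ))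
    (x : ℤ × ℤ) : (Fin 6 → E2) → ℝ :=
  if x ∈ A then V else if x ∈ interf A then Vi V (C x) else Vc V

/-- First variation `⟨δE_a(y), u⟩` of the atomistic energy. -/
def dEa (V : (Fin 6 → E2) → ℝ) (y u : ℤ × ℤ → E2) : ℝ :=
  ∑ᶠ n : ℤ × ℤ, ∑ j : Fin 6, dotE (pd V j (Dfam y n)) (Dfam u n j)

/-- First variation `⟨δE_c(y), u⟩` of the Cauchy–Born energy. -/
def dEc (V : (Fin 6 → E2) → ℝ) (y u : ℤ × ℤ → E2) : ℝ :=
  ∑ᶠ T : Tri, Om0 / 2 * frobI (DW V (triGrad y T)) (triGrad u T)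

/-- First variation `⟨δE_ac(y), u⟩` of the a/c coupling energy. -/
def dEac (V : (Fin 6 → E2) → ℝ) (C : ℤ × ℤ → Fin 6 → Fin 6 → ℝ) (A : Set (ℤ × ℤ))
    (y u : ℤ × ℤ → E2) : ℝ :=
  ∑ᶠ n : ℤ × ℤ, ∑ i : Fin 6, dotE (pd (Vac V C A n) i (Dfam y n)) (Dfam u n i)

/-- The a/c stress `Σac(y;T)`. -/
def Sac (V : (Fin 6 → E2) → ℝ) (C : ℤ × ℤ → Fin 6 → Fin 6 → ℝ) (A : Set (ℤ × ℤ))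
    (y : ℤ × ℤ → E2) (T : Tri) : Mat2 :=
  Om0⁻¹ • ∑ j : Fin 6, outer (pd (Vac V C A (xT T j)) j (Dfam y (xT T j))) (aFam j)

/-- `u ∈ 𝒰₀`: finitely supported displacement. -/
def FinSupp (u : ℤ × ℤ → E2) : Prop := (Function.support u).Finite

/-- `y ∈ 𝒴₀`: deformation with `y - id` finitely supported. -/
def inY0 (y : ℤ × ℤ → E2) : Prop := (Function.support fun n => y n - emb n).Finite

/-- The homogeneous deformation `y_F(x) = Fx`. -/
def yhom (F : Mat2) : ℤ × ℤ → E2 := fun n => mvec F (emb n)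

/-- One-sidedness: `C_{j,i} = 0` unless `i ∈ {j-1, j, j+1}` (mod 6). -/
def oneSided (Cp : Fin 6 → Fin 6 → ℝ) : Prop :=
  ∀ j i : Fin 6, i ≠ j - 1 → i ≠ j → i ≠ j + 1 → Cp j i = 0

/-- Local energy consistency: `C_{j,j-1} = C_{j,j+1} = 1 - C_{j,j}`. -/
def eCons (Cp : Fin 6 → Fin 6 → ℝ) : Prop :=
  ∀ j : Fin 6, Cp j (j - 1) = 1 - Cp j j ∧ Cp j (j + 1) = 1 - Cp j j

/-- The coefficients corresponding to the atomistic site potential (`C_{x,j} = 1`). -/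
def atomC : Fin 6 → Fin 6 → ℝ := fun j i => if i = j then 1 else 0

/-- The coefficients corresponding to the Cauchy–Born site potential (`C_{x,j} = 2/3`). -/
def cbC : Fin 6 → Fin 6 → ℝ := fun j i =>
  if i = j then 2 / 3 else if i = j - 1 ∨ i = j + 1 then 1 / 3 else 0

/-- The negative force `-f_ac(x; y_F) = Σ_{j,i} (C_{x-a_i,j,i} - C_{x,j,i}) ∂_j V(F𝐚)`. -/
def forceSum (C : ℤ × ℤ → Fin 6 → Fin 6 → ℝ) (V : (Fin 6 → E2) → ℝ) (F : Mat2)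
    (x : ℤ × ℤ) : E2 :=
  ∑ j : Fin 6, ∑ i : Fin 6, (C (x - ed ((i : ℕ) + 1)) j i - C x j i) • pd V j (Famat F)

/-- The force consistency condition (5.2) on the coefficients. -/
def fCons (C : ℤ × ℤ → Fin 6 → Fin 6 → ℝ) : Prop :=
  ∀ j : Fin 6, (j : ℕ) < 3 → ∀ x : ℤ × ℤ,
    ∑ i : Fin 6, (C (x - ed ((i : ℕ) + 1)) j i - C (x - ed ((i : ℕ) + 1)) (j + 3) i
      - C x j i + C x (j + 3) i) = 0

/-- `|D²y(x)| = max_{i,j} |D_i D_j y(x)|`. -/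
def D2n (y : ℤ × ℤ → E2) (n : ℤ × ℤ) : ℝ :=
  ⨆ i : Fin 6, ⨆ j : Fin 6, ‖Dd ((i : ℕ) + 1) (Dd ((j : ℕ) + 1) y) n‖

/-- `|D³y(x)| = max_{i,j,k} |D_i D_j D_k y(x)|`. -/
def D3n (y : ℤ × ℤ → E2) (n : ℤ × ℤ) : ℝ :=
  ⨆ i : Fin 6, ⨆ j : Fin 6, ⨆ k : Fin 6,
    ‖Dd ((i : ℕ) + 1) (Dd ((j : ℕ) + 1) (Dd ((k : ℕ) + 1) y)) n‖

/-- `ℓ^p` norm of a lattice function over a subset `S ⊆ ℒ`. -/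
def lpNormS (p : ℝ≥0∞) (f : ℤ × ℤ → ℝ) (S : Set (ℤ × ℤ)) : ℝ :=
  if p = ⊤ then ⨆ x : S, |f x| else (∑ᶠ x ∈ S, |f x| ^ p.toReal) ^ (1 / p.toReal)

/-- `‖∂u‖_{L^q}` for the piecewise affine interpolant. -/
def gradLp (q : ℝ≥0∞) (u : ℤ × ℤ → E2) : ℝ :=
  if q = ⊤ then ⨆ T : Tri, frobN (triGrad u T)
  else (∑ᶠ T : Tri, Om0 / 2 * frobN (triGrad u T) ^ q.toReal) ^ (1 / q.toReal)

/-- `𝒯_𝒜`: triangles with `T ∩ (ℐ ∪ 𝒞) = ∅`. -/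
def TA (A : Set (ℤ × ℤ)) : Set Tri := {T | ∀ n ∈ triVerts T, n ∉ interf A ∧ n ∉ contR A}

/-- `𝒯_𝒞`: triangles with `T ∩ (ℐ ∪ 𝒜) = ∅`. -/
def TC (A : Set (ℤ × ℤ)) : Set Tri := {T | ∀ n ∈ triVerts T, n ∉ interf A ∧ n ∉ A}

/-- `𝒯_ℐ = 𝒯 ∖ (𝒯_𝒜 ∪ 𝒯_𝒞)`. -/
def TI (A : Set (ℤ × ℤ)) : Set Tri := {T | T ∉ TA A ∧ T ∉ TC A}

/-- The midpoint of the edge `(x, x + a_j)`. -/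
def edgeMid (x : ℤ × ℤ) (j : ℤ) : E2 := emb x + (2 : ℝ)⁻¹ • avec j

/-- The edge `(x, x+a_j)` belongs to `𝔉_𝒜` (it lies in a triangle of `𝒯_𝒜`). -/
def edgeInA (A : Set (ℤ × ℤ)) (x : ℤ × ℤ) (j : ℤ) : Prop :=
  Txj x j ∈ TA A ∨ Txj x (j - 1) ∈ TA A

/-- The edge `(x, x+a_j)` belongs to `𝔉_𝒞`. -/
def edgeInC (A : Set (ℤ × ℤ)) (x : ℤ × ℤ) (j : ℤ) : Prop :=
  Txj x j ∈ TC A ∨ Txj x (j - 1) ∈ TC A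

/-- Rotation by `π/2`. -/
def Jmat : Mat2 := !![0, -1; 1, 0]

/-- Midpoint continuity of a piecewise affine field: membership in `N1(𝒯)²`. -/
def midCont (ψ : Tri → E2 → E2) : Prop :=
  ∀ (x : ℤ × ℤ) (j : ℤ), ψ (Txj x j) (edgeMid x j) = ψ (Txj x (j - 1)) (edgeMid x j)

/-- `ψ` is piecewise affine with Jacobian `G T` on each triangle `T`. -/
def affWith (ψ : Tri → E2 → E2) (G : Tri → Mat2) : Prop :=
  ∀ (T : Tri) (z w : E2), ψ T z - ψ T w = mvec (G T) (z - w)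

/-- Assumption 4.1: every interface atom has exactly two interface neighbours and
at least one continuum neighbour. -/
def InterfaceOK (A : Set (ℤ × ℤ)) : Prop :=
  ∀ x ∈ interf A,
    ({j : Fin 6 | x + ed ((j : ℕ) + 1) ∈ interf A}).ncard = 2 ∧
    ∃ j : Fin 6, x + ed ((j : ℕ) + 1) ∈ contR A

/-- The patch test: local energy consistency and local force consistency for all `V ∈ 𝒱`. -/
def PatchTest (C : ℤ × ℤ → Fin 6 → Fin 6 → ℝ) (A : Set (ℤ × ℤ)) : Prop :=
  (∀ V, memV V → ∀ F : Mat2, ∀ x ∈ interf A, Vi V (C x) (Famat F) = V (Famat F)) ∧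
  (∀ V, memV V → ∀ F : Mat2, ∀ u, FinSupp u → dEac V C A (yhom F) u = 0)

/-- The closed triangle `T ⊆ ℝ²`. -/
def triSet (T : Tri) : Set E2 :=
  convexHull ℝ {emb T.1, emb (T.1 + (1, 0)), emb (T.1 + (if T.2 then ((0 : ℤ), (1 : ℤ)) else (1, -1)))}

/-- The closed edge `[x, x + a_j] ⊆ ℝ²`. -/
def edgeSeg (x : ℤ × ℤ) (j : ℤ) : Set E2 := segment ℝ (emb x) (emb (x + ed j))

/-- The atomistic region of the flat interface: `{x ∈ ℒ : x₂ < 0}`. -/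
def flatA : Set (ℤ × ℤ) := {n | emb n 1 < 0}

/-- The extended interface region `ℐ^ext = {x ∈ ℒ : dist(x, ℐ) ≤ 1}`. -/
def Iext (A : Set (ℤ × ℤ)) : Set (ℤ × ℤ) := {x | ∃ z ∈ interf A, ‖emb x - emb z‖ ≤ 1}

/-- Embedding `Fin 3 → Fin 6`. -/
def jlift (j : Fin 3) : Fin 6 := ⟨(j : ℕ), by omega⟩

end AC

namespace ACProofAux
open AC

lemma avec0 (k : ℤ) : avec k 0 = Real.cos (((k:ℝ)-1)*(π/3)) := rfl
lemma avec1 (k : ℤ) : avec k 1 = Real.sin (((k:ℝ)-1)*(π/3)) := rfl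

lemma avec_hexcong (k m : ℤ) (h : (k - m) % 6 = 0) : avec k = avec m := by
  obtain ⟨t, ht⟩ : ∃ t, k = m + 6*t := ⟨(k-m)/6, by omega⟩
  subst ht
  ext i
  fin_cases i
  · show Real.cos _ = Real.cos _
    rw [show ((((m + 6*t : ℤ)):ℝ)-1)*(π/3) = (((m:ℤ):ℝ)-1)*(π/3) + (t:ℝ)*(2*π) by push_cast; ring]
    exact Real.cos_add_int_mul_two_pi _ t
  · show Real.sin _ = Real.sin _
    rw [show ((((m + 6*t : ℤ)):ℝ)-1)*(π/3) = (((m:ℤ):ℝ)-1)*(π/3) + (t:ℝ)*(2*π) by push_cast; ring]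
    exact Real.sin_add_int_mul_two_pi _ t

lemma avec_key (k : ℤ) : avec k + avec (k+2) = avec (k+1) := by
  ext i
  have e1 : ((k:ℝ)-1)*(π/3) = (((k+1:ℤ):ℝ)-1)*(π/3) - π/3 := by push_cast; ring
  have e2 : (((k+2:ℤ):ℝ)-1)*(π/3) = (((k+1:ℤ):ℝ)-1)*(π/3) + π/3 := by push_cast; ring
  fin_cases i
  · show Real.cos _ + Real.cos _ = Real.cos _
    rw [e1, e2, Real.cos_sub, Real.cos_add, Real.cos_pi_div_three]
    ring
  · show Real.sin _ + Real.sin _ = Real.sin _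
    rw [e1, e2, Real.sin_sub, Real.sin_add, Real.cos_pi_div_three]
    ring

lemma avec_add_three (k : ℤ) : avec (k+3) = -avec k := by
  ext i
  have e : (((k+3:ℤ):ℝ)-1)*(π/3) = ((k:ℝ)-1)*(π/3) + π := by push_cast; ring
  fin_cases i
  · show Real.cos _ = -Real.cos _
    rw [e, Real.cos_add_pi]
  · show Real.sin _ = -Real.sin _
    rw [e, Real.sin_add_pi]

lemma cross_avec (k : ℤ) :
    avec k 0 * avec (k+2) 1 - avec k 1 * avec (k+2) 0 = Real.sqrt 3 / 2 := by
  rw [avec0, avec1, avec0, avec1]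
  have e2 : (((k+2:ℤ):ℝ)-1)*(π/3) = ((k:ℝ)-1)*(π/3) + 2*(π/3) := by push_cast; ring
  rw [e2, Real.sin_add, Real.cos_add]
  have h1 := Real.sin_sq_add_cos_sq (((k:ℝ)-1)*(π/3))
  have h2 : Real.sin (2*(π/3)) = Real.sqrt 3 / 2 := by
    rw [show 2*(π/3) = π - π/3 by ring, Real.sin_pi_sub, Real.sin_pi_div_three]
  linear_combination Real.sin (2*(π/3)) * h1 + h2

lemma sub_one (j : Fin 6) : j - 1 = j + 5 := by
  rw [sub_eq_add_neg, show (-1 : Fin 6) = 5 from rfl]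

lemma aFam_add (j : Fin 6) (c : Fin 6) : aFam (j + c) = avec (((j:ℕ):ℤ) + (c:ℕ) + 1) := by
  show avec _ = _
  apply avec_hexcong
  have hv := Fin.val_add j c
  have h6 : (j:ℕ) < 6 := j.isLt
  push_cast [hv]
  omega

lemma aFam_self (j : Fin 6) : aFam j = avec (((j:ℕ):ℤ) + 1) := by
  show avec _ = _
  norm_num

lemma aFam_sub_one (j : Fin 6) : aFam (j - 1) = avec ((j:ℕ):ℤ) := by
  rw [sub_one, aFam_add]
  apply avec_hexcong
  omega

lemma aFam_add_one (j : Fin 6) : aFam (j + 1) = avec (((j:ℕ):ℤ) + 2) := by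
  rw [aFam_add]; exact congrArg avec (by omega)

lemma aFam_add_three (j : Fin 6) : aFam (j + 3) = -aFam j := by
  rw [aFam_add, aFam_self, show (((3:Fin 6)):ℕ) = 3 from rfl,
    show ((j:ℕ):ℤ) + (3:ℕ) + 1 = (((j:ℕ):ℤ) + 1) + 3 by push_cast; ring, avec_add_three]

lemma aFam_mid (j : Fin 6) : aFam (j - 1) + aFam (j + 1) = aFam j := by
  rw [aFam_sub_one, aFam_add_one, aFam_self]
  exact avec_key _

lemma add33 (j : Fin 6) : j + 3 + 3 = j := by
  rw [add_assoc, show (3+3 : Fin 6) = 0 from rfl, add_zero]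

lemma contDiff_eval (m : Fin 6) (k : Fin 2) : ContDiff ℝ 3 (fun g : Fin 6 → E2 => g m k) := by
  have h1 : ContDiff ℝ 3 (fun g : Fin 6 → E2 => g m) :=
    (ContinuousLinearMap.proj m : (Fin 6 → E2) →L[ℝ] E2).contDiff
  exact ((EuclideanSpace.proj k : E2 →L[ℝ] ℝ)).contDiff.comp h1

lemma contDiff_dot (w : Fin 2 → ℝ) (m : Fin 6) :
    ContDiff ℝ 3 (fun g : Fin 6 → E2 => dotE (toE2 w) (g m)) := by
  have h : (fun g : Fin 6 → E2 => dotE (toE2 w) (g m))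
      = fun g => ∑ k : Fin 2, w k * g m k := rfl
  rw [h]
  exact ContDiff.sum fun k _ => contDiff_const.mul (contDiff_eval m k)

lemma dotE_neg (w v : E2) : dotE w (-v) = -dotE w v := by
  simp [dotE, Finset.sum_neg_distrib]

lemma memV_V1 (w : Fin 2 → ℝ) (j : Fin 6) :
    memV (fun g => dotE (toE2 w) (g j) - dotE (toE2 w) (g (j+3))) := by
  constructor
  · exact (contDiff_dot w j).sub (contDiff_dot w (j+3))
  · intro g
    simp only [add33, dotE_neg]
    ring

lemma memV_V2 (w : Fin 2 → ℝ) (j : Fin 6) :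
    memV (fun g => dotE (toE2 w) (g j) ^ 2 + dotE (toE2 w) (g (j+3)) ^ 2) := by
  constructor
  · exact ((contDiff_dot w j).pow 2).add ((contDiff_dot w (j+3)).pow 2)
  · intro g
    simp only [add33, dotE_neg]
    ring

lemma mvec_one (v : E2) : mvec 1 v = v := by
  ext i
  show (∑ k, (1 : Mat2) i k * v k) = v i
  simp [Matrix.one_apply]

lemma Famat_one : Famat 1 = aFam := by
  funext i; exact mvec_one _

def mlin (F : Mat2) : E2 →ₗ[ℝ] E2 where
  toFun := mvec F
  map_add' v w := by
    ext i
    show (∑ k, F i k * (v + w) k) = (∑ k, F i k * v k) + (∑ k, F i k * w k)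
    rw [← Finset.sum_add_distrib]
    refine Finset.sum_congr rfl fun k _ => ?_
    have h : (v + w) k = v k + w k := rfl
    rw [h]; ring
  map_smul' c v := by
    ext i
    show (∑ k, F i k * (c • v) k) = c * ∑ k, F i k * v k
    rw [Finset.mul_sum]
    refine Finset.sum_congr rfl fun k _ => ?_
    have h : (c • v) k = c * v k := rfl
    rw [h]; ring

lemma mvec_sum (F : Mat2) (c : Fin 6 → ℝ) (v : Fin 6 → E2) :
    (∑ i, c i • mvec F (v i)) = mvec F (∑ i, c i • v i) := by
  have h1 : mvec F (∑ i, c i • v i) = (mlin F) (∑ i, c i • v i) := rfl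
  rw [h1, map_sum (mlin F) (fun i => c i • v i) Finset.univ]
  exact Finset.sum_congr rfl fun i _ => by rw [(mlin F).map_smul (c i) (v i)]; rfl

lemma three_ne (j : Fin 6) : j - 1 ≠ j ∧ j - 1 ≠ j + 1 ∧ j ≠ j + 1 := by
  fin_cases j <;> exact ⟨by decide, by decide, by decide⟩

lemma sum_reduce (Cp : Fin 6 → Fin 6 → ℝ) (hos : oneSided Cp) (j : Fin 6) (v : Fin 6 → E2) :
    ∑ i, Cp j i • v i
      = Cp j (j-1) • v (j-1) + Cp j j • v j + Cp j (j+1) • v (j+1) := by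
  obtain ⟨hne1, hne2, hne3⟩ := three_ne j
  have hz : ∀ i ∈ Finset.univ, i ∉ ({j-1, j, j+1} : Finset (Fin 6)) → Cp j i • v i = 0 := by
    intro i _ hi
    simp only [Finset.mem_insert, Finset.mem_singleton, not_or] at hi
    rw [hos j i hi.1 hi.2.1 hi.2.2, zero_smul]
  rw [← Finset.sum_subset (Finset.subset_univ ({j-1, j, j+1} : Finset (Fin 6))) hz]
  rw [Finset.sum_insert (by simp [hne1, hne2]), Finset.sum_insert (by simp [hne3]),
    Finset.sum_singleton]
  abel

lemma dot_single (l : Fin 2) (v : E2) : dotE (toE2 (Pi.single l 1)) v = v l := by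
  simp [dotE, toE2, Pi.single_apply, ite_mul, one_mul, zero_mul, Finset.sum_ite_eq']

end ACProofAux

open AC in
/-- characterisation of local energy consistency (Proposition 3.1). -/
theorem energy_consistency_characterisation
    (Cp : Fin 6 → Fin 6 → ℝ) (hos : oneSided Cp) :
    (∀ V : (Fin 6 → E2) → ℝ, memV V → ∀ F : Mat2, Vi V Cp (Famat F) = V (Famat F)) ↔
      eCons Cp := by
  constructor
  · -- energy consistency for all V implies eCons
    intro H j
    obtain ⟨hne1, hne2, hne3⟩ := ACProofAux.three_ne j
    have happ : ∀ w : Fin 2 → ℝ,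
        dotE (toE2 w) (∑ i, Cp j i • aFam i) = dotE (toE2 w) (aFam j) := by
      intro w
      have h1 := H _ (ACProofAux.memV_V1 w j) 1
      have h2 := H _ (ACProofAux.memV_V2 w j) 1
      simp only [Vi, ACProofAux.Famat_one] at h1 h2
      set s := dotE (toE2 w) (∑ i, Cp j i • aFam i) with hs
      set u := dotE (toE2 w) (∑ i, Cp (j+3) i • aFam i) with hu
      set p := dotE (toE2 w) (aFam j) with hp
      have hq : dotE (toE2 w) (aFam (j+3)) = -p := by
        rw [ACProofAux.aFam_add_three, ACProofAux.dotE_neg]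
      rw [hq] at h1 h2
      have h3 : (s + u)^2 = 0 := by linear_combination (-(s - u + 2*p)) * h1 + 2*h2
      have h4 : s + u = 0 := by
        exact pow_eq_zero_iff (by norm_num) |>.mp h3
      linarith [h1, h4]
    have hvec : ∑ i, Cp j i • aFam i = aFam j := by
      ext l
      have h := happ (Pi.single l 1)
      rw [ACProofAux.dot_single, ACProofAux.dot_single] at h
      exact h
    rw [ACProofAux.sum_reduce Cp hos j aFam] at hvec
    rw [ACProofAux.aFam_sub_one, ACProofAux.aFam_add_one, ACProofAux.aFam_self] at hvec
    set k : ℤ := ((j:ℕ):ℤ) with hk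
    have hx := congrArg (fun v : E2 => v 0) hvec
    have hy := congrArg (fun v : E2 => v 1) hvec
    simp only [PiLp.add_apply, PiLp.smul_apply, smul_eq_mul] at hx hy
    have hmid := ACProofAux.avec_key k
    have hmx := congrArg (fun v : E2 => v 0) hmid
    have hmy := congrArg (fun v : E2 => v 1) hmid
    simp only [PiLp.add_apply] at hmx hmy
    have hD := ACProofAux.cross_avec k
    have hD0 : avec k 0 * avec (k+2) 1 - avec k 1 * avec (k+2) 0 ≠ 0 := by
      rw [hD]
      positivity
    set x1 := avec k 0; set y1 := avec k 1
    set x2 := avec (k+2) 0; set y2 := avec (k+2) 1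
    set c1 := Cp j (j-1); set c2 := Cp j j; set c3 := Cp j (j+1)
    rw [← hmx] at hx
    rw [← hmy] at hy
    constructor
    · have hzero : (c1 + c2 - 1) * (x1*y2 - y1*x2) = 0 := by
        linear_combination y2 * hx - x2 * hy
      rcases mul_eq_zero.mp hzero with h | h
      · linarith
      · exact absurd h hD0
    · have hzero : (c3 + c2 - 1) * (x1*y2 - y1*x2) = 0 := by
        linear_combination x1 * hy - y1 * hx
      rcases mul_eq_zero.mp hzero with h | h
      · linarith
      · exact absurd h hD0
  · -- eCons implies energy consistency
    intro hec V _ F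
    have hcore : ∀ m : Fin 6, (∑ i, Cp m i • aFam i) = aFam m := by
      intro m
      rw [ACProofAux.sum_reduce Cp hos m aFam, (hec m).1, (hec m).2,
        ← ACProofAux.aFam_mid m]
      have A := aFam (m - 1); have B := aFam (m + 1)
      rw [smul_add]
      module
    unfold Vi
    congr 1
    funext m
    show (∑ i, Cp m i • mvec F (aFam i)) = mvec F (aFam m)
    rw [ACProofAux.mvec_sum, hcore m]
end
end

section
/- Suppose the parameters (C_{x,j,i}), x ∈ ℐ, satisfy the one-sidedness condition and energy consistency, and are extended to all of ℒ by C_{x,j} := 1 for x ∈ 𝒜 and C_{x,j} := 2/3 for x ∈ 𝒞 (compatibly with one-sidedness and energy consistency). Then for every V ∈ 𝒱, every F ∈ ℝ^{2×2}, and every u ∈ 𝒰₀, ⟨δE_ac(y_F), u⟩ = Σ_{x∈ℒ} [ Σ_{j=1}^6 Σ_{i=1}^6 (C_{x−a_i,j,i} − C_{x,j,i}) ∂_j V(F𝐚) ] · u(x); that is, the negative force on the atom at x ∈ ℒ under the homogeneous deformation y_F equals −f_ac(x; y_F) = Σ_{j=1}^6 Σ_{i=1}^6 (C_{x−a_i,j,i}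 − C_{x,j,i}) ∂_j V(F𝐚). -/
open Real
open scoped BigOperators Classical ENNReal

noncomputable section

namespace AC

/-! ### Auxiliary lemmas -/

section Aux

lemma om0_pos : 0 < Om0 := by
  unfold Om0
  positivity

lemma avec_apply0 (j : ℤ) : avec j 0 = Real.cos (((j : ℝ) - 1) * (Real.pi / 3)) := rfl

lemma avec_apply1 (j : ℤ) : avec j 1 = Real.sin (((j : ℝ) - 1) * (Real.pi / 3)) := rfl

lemma cross_avec (p q : ℤ) :
    avec p 0 * avec q 1 - avec p 1 * avec q 0
      = Real.sin (((q : ℝ) - (p : ℝ)) * (Real.pi / 3)) := by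
  rw [avec_apply0, avec_apply1, avec_apply0, avec_apply1,
    show ((q : ℝ) - (p : ℝ)) * (Real.pi / 3)
        = ((q : ℝ) - 1) * (Real.pi / 3) - ((p : ℝ) - 1) * (Real.pi / 3) by ring,
    Real.sin_sub]
  ring

lemma sin_pi3_sq : Real.sin (Real.pi / 3) ^ 2 = 3 / 4 := by
  rw [Real.sin_pi_div_three, div_pow, Real.sq_sqrt] <;> norm_num

lemma cos_rec (x : ℝ) :
    Real.cos (x + 2 * (Real.pi / 3)) = Real.cos (x + Real.pi / 3) - Real.cos x := by
  rw [show x + 2 * (Real.pi / 3) = x + Real.pi / 3 + Real.pi / 3 by ring,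
    Real.cos_add (x + Real.pi / 3), Real.cos_add x, Real.sin_add x,
    Real.cos_pi_div_three]
  linear_combination (-(Real.cos x)) * sin_pi3_sq

lemma sin_rec (x : ℝ) :
    Real.sin (x + 2 * (Real.pi / 3)) = Real.sin (x + Real.pi / 3) - Real.sin x := by
  rw [show x + 2 * (Real.pi / 3) = x + Real.pi / 3 + Real.pi / 3 by ring,
    Real.sin_add (x + Real.pi / 3), Real.cos_add x, Real.sin_add x,
    Real.cos_pi_div_three]
  linear_combination (-(Real.sin x)) * sin_pi3_sq

lemma avec_rec (J : ℤ) : avec (J + 2) = avec (J + 1) - avec J := by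
  ext k
  rw [PiLp.sub_apply]
  fin_cases k
  · rw [show (⟨0, by norm_num⟩ : Fin 2) = 0 from rfl, avec_apply0, avec_apply0, avec_apply0]
    push_cast
    rw [show ((J : ℝ) + 2 - 1) * (Real.pi / 3)
          = ((J : ℝ) - 1) * (Real.pi / 3) + 2 * (Real.pi / 3) by ring,
      show ((J : ℝ) + 1 - 1) * (Real.pi / 3)
          = ((J : ℝ) - 1) * (Real.pi / 3) + (Real.pi / 3) by ring,
      cos_rec]
  · rw [show (⟨1, by norm_num⟩ : Fin 2) = 1 from rfl, avec_apply1, avec_apply1, avec_apply1]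
    push_cast
    rw [show ((J : ℝ) + 2 - 1) * (Real.pi / 3)
          = ((J : ℝ) - 1) * (Real.pi / 3) + 2 * (Real.pi / 3) by ring,
      show ((J : ℝ) + 1 - 1) * (Real.pi / 3)
          = ((J : ℝ) - 1) * (Real.pi / 3) + (Real.pi / 3) by ring,
      sin_rec]

lemma avec_neg3 (J : ℤ) : avec (J + 3) = -avec J := by
  have h1 := avec_rec J
  have h2 := avec_rec (J + 1)
  rw [show J + 1 + 2 = J + 3 by ring, show J + 1 + 1 = J + 2 by ring] at h2
  rw [h2, h1]
  abel

lemma avec_per (J : ℤ) : avec (J + 6) = avec J := by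
  have h1 := avec_neg3 J
  have h2 := avec_neg3 (J + 3)
  rw [show J + 3 + 3 = J + 6 by ring] at h2
  rw [h2, h1, neg_neg]

end Aux

section Coef

lemma sin_pi3_ne : Real.sin (Real.pi / 3) ≠ 0 := by
  rw [Real.sin_pi_div_three]
  positivity

/-- Auxiliary coefficient `sin(dπ/3)/sin(π/3)`. -/
def coef (d : ℤ) : ℝ := Real.sin ((d : ℝ) * (Real.pi / 3)) / Real.sin (Real.pi / 3)

lemma coef_zero : coef 0 = 0 := by simp [coef]

lemma coef_one : coef 1 = 1 := by
  simp only [coef, Int.cast_one, one_mul]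
  exact div_self sin_pi3_ne

lemma coef_two : coef 2 = 1 := by
  rw [coef, show ((2:ℤ):ℝ) * (Real.pi / 3) = Real.pi - Real.pi / 3 by push_cast; ring,
    Real.sin_pi_sub]
  exact div_self sin_pi3_ne

lemma coef_three : coef 3 = 0 := by
  rw [coef, show ((3:ℤ):ℝ) * (Real.pi / 3) = Real.pi by push_cast; ring, Real.sin_pi, zero_div]

lemma coef_add_three (d : ℤ) : coef (d + 3) = -coef d := by
  rw [coef, coef, show ((d + 3 : ℤ) : ℝ) * (Real.pi / 3) = (d : ℝ) * (Real.pi / 3) + Real.pi by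
    push_cast; ring, Real.sin_add_pi, neg_div]

lemma coef_add_six (d : ℤ) : coef (d + 6) = coef d := by
  have h := coef_add_three (d + 3)
  rw [show d + 3 + 3 = d + 6 by ring, coef_add_three d, neg_neg] at h
  exact h

lemma coef_four : coef 4 = -1 := by
  rw [show (4:ℤ) = 1 + 3 by norm_num, coef_add_three, coef_one]

lemma coef_five : coef 5 = -1 := by
  rw [show (5:ℤ) = 2 + 3 by norm_num, coef_add_three, coef_two]

lemma coef_six : coef 6 = 0 := by
  rw [show (6:ℤ) = 3 + 3 by norm_num, coef_add_three, coef_three, neg_zero]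

lemma coef_neg_one : coef (-1) = -1 := by
  have := coef_add_six (-1); rw [show (-1 + 6 : ℤ) = 5 by norm_num, coef_five] at this
  linarith

lemma coef_neg_two : coef (-2) = -1 := by
  have := coef_add_six (-2); rw [show (-2 + 6 : ℤ) = 4 by norm_num, coef_four] at this
  linarith

lemma coef_neg_three : coef (-3) = 0 := by
  have := coef_add_six (-3); rw [show (-3 + 6 : ℤ) = 3 by norm_num, coef_three] at this
  linarith

lemma coef_neg_four : coef (-4) = 1 := by
  have := coef_add_six (-4); rw [show (-4 + 6 : ℤ) = 2 by norm_num, coef_two] at this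
  linarith

lemma coef_neg_five : coef (-5) = 1 := by
  have := coef_add_six (-5); rw [show (-5 + 6 : ℤ) = 1 by norm_num, coef_one] at this
  linarith

end Coef

section MvecSolve

lemma mvec_apply (F : Mat2) (v : E2) (l : Fin 2) :
    mvec F v l = F l 0 * v 0 + F l 1 * v 1 := by
  simp [mvec, toE2, Fin.sum_univ_two]

lemma mvec_add (F : Mat2) (v w : E2) : mvec F (v + w) = mvec F v + mvec F w := by
  ext l
  rw [PiLp.add_apply, mvec_apply, mvec_apply, mvec_apply, PiLp.add_apply, PiLp.add_apply]
  ring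

lemma mvec_smul (F : Mat2) (c : ℝ) (v : E2) : mvec F (c • v) = c • mvec F v := by
  ext l
  rw [PiLp.smul_apply, mvec_apply, mvec_apply, PiLp.smul_apply, PiLp.smul_apply,
    smul_eq_mul, smul_eq_mul, smul_eq_mul]
  ring

lemma mvec_neg (F : Mat2) (v : E2) : mvec F (-v) = -mvec F v := by
  ext l
  rw [PiLp.neg_apply, mvec_apply, mvec_apply, PiLp.neg_apply, PiLp.neg_apply]
  ring

lemma mvec_sub (F : Mat2) (v w : E2) : mvec F (v - w) = mvec F v - mvec F w := by
  ext l
  rw [PiLp.sub_apply, mvec_apply, mvec_apply, mvec_apply, PiLp.sub_apply, PiLp.sub_apply]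
  ring

lemma mvec_matadd (F M : Mat2) (t : ℝ) (v : E2) :
    mvec (F + t • M) v = mvec F v + t • mvec M v := by
  ext l
  rw [PiLp.add_apply, PiLp.smul_apply, mvec_apply, mvec_apply, mvec_apply,
    Matrix.add_apply, Matrix.add_apply, Matrix.smul_apply, Matrix.smul_apply,
    smul_eq_mul, smul_eq_mul, smul_eq_mul]
  ring

lemma solve2_add_smul (b1 b2 v1 v2 w1 w2 : E2) (t : ℝ) :
    solve2 b1 b2 (v1 + t • w1) (v2 + t • w2)
      = solve2 b1 b2 v1 v2 + t • solve2 b1 b2 w1 w2 := by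
  funext i k
  simp only [solve2, Matrix.add_apply, Matrix.smul_apply, PiLp.add_apply, PiLp.smul_apply,
    smul_eq_mul]
  split_ifs <;> ring

lemma solve2_mvec (b1 b2 : E2) (F : Mat2) (hd : b1 0 * b2 1 - b1 1 * b2 0 ≠ 0) :
    solve2 b1 b2 (mvec F b1) (mvec F b2) = F := by
  funext i k
  fin_cases k <;>
    (simp only [solve2, mvec_apply]
     rw [div_eq_iff hd]) <;> simp <;> ring

lemma mvec_solve2_avec (J m : ℤ) (v1 v2 : E2) :
    mvec (solve2 (avec J) (avec (J + 1)) v1 v2) (avec m)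
      = coef (J + 1 - m) • v1 + coef (m - J) • v2 := by
  have hdet : avec J 0 * avec (J + 1) 1 - avec J 1 * avec (J + 1) 0
      = Real.sin (Real.pi / 3) := by
    rw [cross_avec]
    congr 1
    push_cast
    ring
  have hc1 : avec m 0 * avec (J + 1) 1 - avec m 1 * avec (J + 1) 0
      = Real.sin (((J + 1 - m : ℤ) : ℝ) * (Real.pi / 3)) := by
    rw [cross_avec]
    congr 1
    push_cast
    ring
  have hc2 : avec J 0 * avec m 1 - avec J 1 * avec m 0
      = Real.sin (((m - J : ℤ) : ℝ) * (Real.pi / 3)) := by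
    rw [cross_avec]
    congr 1
    push_cast
    ring
  have hd : avec J 0 * avec (J + 1) 1 - avec J 1 * avec (J + 1) 0 ≠ 0 := by
    rw [hdet]; exact sin_pi3_ne
  ext l
  have h0 : solve2 (avec J) (avec (J + 1)) v1 v2 l 0
      = (v1 l * avec (J + 1) 1 - v2 l * avec J 1)
        / (avec J 0 * avec (J + 1) 1 - avec J 1 * avec (J + 1) 0) := by
    simp [solve2]
  have h1 : solve2 (avec J) (avec (J + 1)) v1 v2 l 1
      = (v2 l * avec J 0 - v1 l * avec (J + 1) 0)
        / (avec J 0 * avec (J + 1) 1 - avec J 1 * avec (J + 1) 0) := by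
    simp [solve2]
  rw [mvec_apply, h0, h1, PiLp.add_apply, PiLp.smul_apply, PiLp.smul_apply,
    smul_eq_mul, smul_eq_mul]
  unfold coef
  rw [← hc1, ← hc2, ← hdet]
  field_simp
  ring

lemma det_avec_ne (J : ℤ) : avec J 0 * avec (J + 1) 1 - avec J 1 * avec (J + 1) 0 ≠ 0 := by
  rw [cross_avec, show ((((J+1):ℤ):ℝ) - (J:ℝ)) * (Real.pi / 3) = Real.pi / 3 by push_cast; ring]
  exact sin_pi3_ne

end MvecSolve

section Calc

lemma line_hasDerivAt (g w : Fin 6 → E2) (t0 : ℝ) :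
    HasDerivAt (fun t : ℝ => g + t • w) w t0 := by
  simpa using ((hasDerivAt_id t0).smul_const w).const_add g

lemma line_diff (V : (Fin 6 → E2) → ℝ) (hV : Differentiable ℝ V) (g w : Fin 6 → E2) (t : ℝ) :
    DifferentiableAt ℝ (fun t : ℝ => V (g + t • w)) t :=
  (hV _).comp t (line_hasDerivAt g w t).differentiableAt

lemma deriv_line (V : (Fin 6 → E2) → ℝ) (hV : Differentiable ℝ V) (g w : Fin 6 → E2) :
    deriv (fun t : ℝ => V (g + t • w)) 0 = fderiv ℝ V g w := by
  have hF : HasFDerivAt V (fderiv ℝ V g) ((fun t : ℝ => g + t • w) 0) := by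
    simpa using (hV g).hasFDerivAt
  simpa [Function.comp_def] using (hF.comp_hasDerivAt 0 (line_hasDerivAt g w 0)).deriv

lemma unitv_decomp (w : Fin 6 → E2) :
    ∑ j : Fin 6, ∑ k : Fin 2, w j k • unitv j k = w := by
  funext m
  rw [Finset.sum_apply]
  ext l
  rw [WithLp.ofLp_sum, Finset.sum_apply]
  have key : ∀ j : Fin 6, (∑ k : Fin 2, w j k • unitv j k) m l
      = if m = j then w m l else 0 := by
    intro j
    rw [Finset.sum_apply, WithLp.ofLp_sum, Finset.sum_apply]
    simp only [unitv, toE2, Pi.smul_apply, PiLp.smul_apply, smul_eq_mul]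
    by_cases h : m = j
    · subst h
      fin_cases l <;> simp [Pi.single_apply, Fin.sum_univ_two]
    · simp [h]
  rw [Finset.sum_congr rfl fun j _ => key j]
  simp

lemma pd_apply (V : (Fin 6 → E2) → ℝ) (hV : Differentiable ℝ V) (j : Fin 6)
    (g : Fin 6 → E2) (k : Fin 2) :
    pd V j g k = fderiv ℝ V g (unitv j k) :=
  deriv_line V hV g (unitv j k)

lemma fderiv_expand (V : (Fin 6 → E2) → ℝ) (hV : Differentiable ℝ V) (g w : Fin 6 → E2) :
    fderiv ℝ V g w = ∑ j : Fin 6, ∑ k : Fin 2, w j k * pd V j g k := by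
  calc fderiv ℝ V g w = fderiv ℝ V g (∑ j : Fin 6, ∑ k : Fin 2, w j k • unitv j k) := by
        rw [unitv_decomp]
    _ = ∑ j : Fin 6, ∑ k : Fin 2, w j k * pd V j g k := by
        rw [map_sum]
        refine Finset.sum_congr rfl fun j _ => ?_
        rw [map_sum]
        refine Finset.sum_congr rfl fun k _ => ?_
        rw [map_smul, pd_apply V hV, smul_eq_mul]

lemma deriv_line_expand (V : (Fin 6 → E2) → ℝ) (hV : Differentiable ℝ V)
    (g w : Fin 6 → E2) :
    deriv (fun t : ℝ => V (g + t • w)) 0 = ∑ j : Fin 6, ∑ k : Fin 2, w j k * pd V j g k := by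
  rw [deriv_line V hV, fderiv_expand V hV]

end Calc

section Symm

lemma avec_41 : avec 4 = -avec 1 := by rw [show (4:ℤ) = 1 + 3 by norm_num]; exact avec_neg3 1
lemma avec_52 : avec 5 = -avec 2 := by rw [show (5:ℤ) = 2 + 3 by norm_num]; exact avec_neg3 2
lemma avec_63 : avec 6 = -avec 3 := by rw [show (6:ℤ) = 3 + 3 by norm_num]; exact avec_neg3 3
lemma avec_71 : avec 7 = avec 1 := by rw [show (7:ℤ) = 1 + 6 by norm_num]; exact avec_per 1
lemma avec_312 : avec 3 = avec 2 - avec 1 := by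
  rw [show (3:ℤ) = 1 + 2 by norm_num]; exact avec_rec 1

lemma Famat_symm (F : Mat2) (m : Fin 6) : Famat F m = -Famat F (m + 3) := by
  have h1 : mvec F (avec 1) = -mvec F (avec 4) := by rw [avec_41, mvec_neg, neg_neg]
  have h2 : mvec F (avec 2) = -mvec F (avec 5) := by rw [avec_52, mvec_neg, neg_neg]
  have h3 : mvec F (avec 3) = -mvec F (avec 6) := by rw [avec_63, mvec_neg, neg_neg]
  have h4 : mvec F (avec 4) = -mvec F (avec 1) := by rw [avec_41, mvec_neg]
  have h5 : mvec F (avec 5) = -mvec F (avec 2) := by rw [avec_52, mvec_neg]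
  have h6 : mvec F (avec 6) = -mvec F (avec 3) := by rw [avec_63, mvec_neg]
  fin_cases m
  · exact h1
  · exact h2
  · exact h3
  · exact h4
  · exact h5
  · exact h6

lemma unitv_shift (j : Fin 6) (k : Fin 2) (m : Fin 6) :
    unitv j k (m + 3) = unitv (j + 3) k m := by
  simp only [unitv]
  by_cases hm : m = j + 3
  · subst hm
    rw [if_pos rfl, if_pos]
    rw [add_assoc]
    simp [show (3 + 3 : Fin 6) = 0 from rfl]
  · rw [if_neg, if_neg hm]
    intro hc
    apply hm
    have := congrArg (· + 3) hc
    simpa [add_assoc, show (3 + 3 : Fin 6) = 0 from rfl] using this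

end Symm

section PdSymm

lemma pd_symm (V : (Fin 6 → E2) → ℝ) (hV : memV V) (F : Mat2) (j : Fin 6) :
    pd V (j + 3) (Famat F) = -pd V j (Famat F) := by
  ext k
  have key : ∀ t : ℝ, V (Famat F + t • unitv (j + 3) k)
      = V (Famat F + -t • unitv j k) := by
    intro t
    have hsym := hV.2 (Famat F + -t • unitv j k)
    rw [← hsym]
    congr 1
    funext m
    rw [Pi.add_apply, Pi.add_apply, Pi.smul_apply, Pi.smul_apply]
    have h1 : -(Famat F (m + 3) + -t • unitv j k (m + 3))
        = Famat F m + t • unitv (j + 3) k m := by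
      rw [unitv_shift, Famat_symm F m]
      module
    exact h1.symm
  show deriv (fun t : ℝ => V (Famat F + t • unitv (j + 3) k)) 0 = (-pd V j (Famat F)) k
  rw [PiLp.neg_apply]
  rw [show (fun t : ℝ => V (Famat F + t • unitv (j + 3) k))
      = fun t : ℝ => V (Famat F + -t • unitv j k) from funext key]
  have h := deriv_comp_neg (f := fun s : ℝ => V (Famat F + s • unitv j k)) (x := (0 : ℝ))
  rw [neg_zero] at h
  exact h.trans (by rfl)

end PdSymm

section Emb

lemma emb_add (n m : ℤ × ℤ) : emb (n + m) = emb n + emb m := by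
  unfold emb
  rw [Prod.fst_add, Prod.snd_add]
  push_cast
  module

lemma emb_ed (i : Fin 6) : emb (ed ((i : ℕ) + 1)) = avec ((i : ℕ) + 1) := by
  fin_cases i
  · show emb (1, 0) = avec 1
    unfold emb
    push_cast
    module
  · show emb (0, 1) = avec 2
    unfold emb
    push_cast
    module
  · show emb (-1, 1) = avec 3
    unfold emb
    rw [avec_312]
    push_cast
    module
  · show emb (-1, 0) = avec 4
    unfold emb
    rw [avec_41]
    push_cast
    module
  · show emb (0, -1) = avec 5
    unfold emb
    rw [avec_52]
    push_cast
    module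
  · show emb (1, -1) = avec 6
    unfold emb
    rw [avec_63, avec_312]
    push_cast
    module

lemma Dfam_yhom (F : Mat2) (n : ℤ × ℤ) : Dfam (yhom F) n = Famat F := by
  funext i
  show Dd ((i : ℕ) + 1) (yhom F) n = Famat F i
  unfold Dd yhom Famat aFam
  rw [emb_add, mvec_add, add_sub_cancel_left, emb_ed i]

end Emb

section ViLemma

lemma lam_famat (Cp : Fin 6 → Fin 6 → ℝ) (hs : oneSided Cp) (he : eCons Cp) (F : Mat2) :
    (fun j : Fin 6 => ∑ i' : Fin 6, Cp j i' • Famat F i') = Famat F := by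
  funext j
  rw [Fin.sum_univ_six]
  fin_cases j <;> beta_reduce <;> simp only [Fin.zero_eta, Fin.mk_one, Fin.reduceFinMk]
  · have e1 : Cp 0 1 = 1 - Cp 0 0 := (he 0).2
    have e2 : Cp 0 5 = 1 - Cp 0 0 := (he 0).1
    rw [hs 0 2 (by decide) (by decide) (by decide),
      hs 0 3 (by decide) (by decide) (by decide),
      hs 0 4 (by decide) (by decide) (by decide), e1, e2]
    simp only [Famat, aFam, zero_smul, add_zero, zero_add]
    norm_num [show (((2:Fin 6):ℕ):ℤ) = 2 from rfl, show (((3:Fin 6):ℕ):ℤ) = 3 from rfl,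
      show (((4:Fin 6):ℕ):ℤ) = 4 from rfl, show (((5:Fin 6):ℕ):ℤ) = 5 from rfl]
    rw [avec_63, avec_312]
    simp only [mvec_neg, mvec_sub]
    module
  · have e1 : Cp 1 2 = 1 - Cp 1 1 := (he 1).2
    have e2 : Cp 1 0 = 1 - Cp 1 1 := (he 1).1
    rw [hs 1 3 (by decide) (by decide) (by decide),
      hs 1 4 (by decide) (by decide) (by decide),
      hs 1 5 (by decide) (by decide) (by decide), e1, e2]
    simp only [Famat, aFam, zero_smul, add_zero, zero_add]
    norm_num [show (((2:Fin 6):ℕ):ℤ) = 2 from rfl, show (((3:Fin 6):ℕ):ℤ) = 3 from rfl,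
      show (((4:Fin 6):ℕ):ℤ) = 4 from rfl, show (((5:Fin 6):ℕ):ℤ) = 5 from rfl]
    rw [avec_312]
    simp only [mvec_neg, mvec_sub]
    module
  · have e1 : Cp 2 3 = 1 - Cp 2 2 := (he 2).2
    have e2 : Cp 2 1 = 1 - Cp 2 2 := (he 2).1
    rw [hs 2 0 (by decide) (by decide) (by decide),
      hs 2 4 (by decide) (by decide) (by decide),
      hs 2 5 (by decide) (by decide) (by decide), e1, e2]
    simp only [Famat, aFam, zero_smul, add_zero, zero_add]
    norm_num [show (((2:Fin 6):ℕ):ℤ) = 2 from rfl, show (((3:Fin 6):ℕ):ℤ) = 3 from rfl,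
      show (((4:Fin 6):ℕ):ℤ) = 4 from rfl, show (((5:Fin 6):ℕ):ℤ) = 5 from rfl]
    rw [avec_41, avec_312]
    simp only [mvec_neg, mvec_sub]
    module
  · have e1 : Cp 3 4 = 1 - Cp 3 3 := (he 3).2
    have e2 : Cp 3 2 = 1 - Cp 3 3 := (he 3).1
    rw [hs 3 0 (by decide) (by decide) (by decide),
      hs 3 1 (by decide) (by decide) (by decide),
      hs 3 5 (by decide) (by decide) (by decide), e1, e2]
    simp only [Famat, aFam, zero_smul, add_zero, zero_add]
    norm_num [show (((2:Fin 6):ℕ):ℤ) = 2 from rfl, show (((3:Fin 6):ℕ):ℤ) = 3 from rfl,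
      show (((4:Fin 6):ℕ):ℤ) = 4 from rfl, show (((5:Fin 6):ℕ):ℤ) = 5 from rfl]
    rw [avec_41, avec_52, avec_312]
    simp only [mvec_neg, mvec_sub]
    module
  · have e1 : Cp 4 5 = 1 - Cp 4 4 := (he 4).2
    have e2 : Cp 4 3 = 1 - Cp 4 4 := (he 4).1
    rw [hs 4 0 (by decide) (by decide) (by decide),
      hs 4 1 (by decide) (by decide) (by decide),
      hs 4 2 (by decide) (by decide) (by decide), e1, e2]
    simp only [Famat, aFam, zero_smul, add_zero, zero_add]
    norm_num [show (((2:Fin 6):ℕ):ℤ) = 2 from rfl, show (((3:Fin 6):ℕ):ℤ) = 3 from rfl,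
      show (((4:Fin 6):ℕ):ℤ) = 4 from rfl, show (((5:Fin 6):ℕ):ℤ) = 5 from rfl]
    rw [avec_41, avec_52, avec_63, avec_312]
    simp only [mvec_neg, mvec_sub]
    module
  · have e1 : Cp 5 0 = 1 - Cp 5 5 := (he 5).2
    have e2 : Cp 5 4 = 1 - Cp 5 5 := (he 5).1
    rw [hs 5 1 (by decide) (by decide) (by decide),
      hs 5 2 (by decide) (by decide) (by decide),
      hs 5 3 (by decide) (by decide) (by decide), e1, e2]
    simp only [Famat, aFam, zero_smul, add_zero, zero_add]
    norm_num [show (((2:Fin 6):ℕ):ℤ) = 2 from rfl, show (((3:Fin 6):ℕ):ℤ) = 3 from rfl,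
      show (((4:Fin 6):ℕ):ℤ) = 4 from rfl, show (((5:Fin 6):ℕ):ℤ) = 5 from rfl]
    rw [avec_52, avec_63, avec_312]
    simp only [mvec_neg, mvec_sub]
    module

end ViLemma

section PdVi

lemma unitv_sum_pick (c : Fin 6 → ℝ) (i : Fin 6) (k : Fin 2) :
    ∑ i' : Fin 6, c i' • unitv i k i' = c i • toE2 (Pi.single k 1) := by
  rw [Finset.sum_eq_single i]
  · simp [unitv]
  · intro b _ hb
    simp [unitv, hb]
  · simp

lemma pd_Vi (V : (Fin 6 → E2) → ℝ) (hV : memV V) (Cp : Fin 6 → Fin 6 → ℝ)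
    (hs : oneSided Cp) (he : eCons Cp) (F : Mat2) (i : Fin 6) :
    pd (Vi V Cp) i (Famat F) = ∑ j : Fin 6, Cp j i • pd V j (Famat F) := by
  have hVd : Differentiable ℝ V := hV.1.differentiable (by norm_num)
  ext k
  have hfun : (fun t : ℝ => Vi V Cp (Famat F + t • unitv i k))
      = fun t : ℝ => V (Famat F + t • fun j : Fin 6 => Cp j i • toE2 (Pi.single k 1)) := by
    funext t
    unfold Vi
    congr 1
    funext j
    simp only [Pi.add_apply, Pi.smul_apply]
    calc ∑ i' : Fin 6, Cp j i' • (Famat F i' + t • unitv i k i')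
        = (∑ i' : Fin 6, Cp j i' • Famat F i')
          + t • ∑ i' : Fin 6, Cp j i' • unitv i k i' := by
          rw [Finset.smul_sum, ← Finset.sum_add_distrib]
          refine Finset.sum_congr rfl fun i' _ => ?_
          rw [smul_add, smul_comm t (Cp j i')]
      _ = Famat F j + t • (Cp j i • toE2 (Pi.single k 1)) := by
          rw [congrFun (lam_famat Cp hs he F) j, unitv_sum_pick]
  show deriv (fun t : ℝ => Vi V Cp (Famat F + t • unitv i k)) 0
      = (∑ j : Fin 6, Cp j i • pd V j (Famat F)) k
  rw [hfun, deriv_line_expand V hVd, WithLp.ofLp_sum, Finset.sum_apply]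
  refine Finset.sum_congr rfl fun j _ => ?_
  rw [Fin.sum_univ_two, PiLp.smul_apply, smul_eq_mul]
  simp only [PiLp.smul_apply, smul_eq_mul, toE2]
  fin_cases k <;> simp [Pi.single_apply]

lemma sum_atomC (V : (Fin 6 → E2) → ℝ) (g : Fin 6 → E2) (i : Fin 6) :
    ∑ j : Fin 6, atomC j i • pd V j g = pd V i g := by
  rw [Finset.sum_eq_single i]
  · simp [atomC]
  · intro b _ hb
    simp [atomC, Ne.symm hb]
  · simp

end PdVi

section PdVc

lemma Famat_succ (F : Mat2) (j : Fin 6) :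
    mvec F (avec ((j : ℕ) + 2)) = Famat F (j + 1) := by
  fin_cases j
  · rfl
  · rfl
  · rfl
  · rfl
  · rfl
  · show mvec F (avec 7) = mvec F (avec 1)
    rw [avec_71]

lemma solve2_famat (F : Mat2) (j : Fin 6) :
    solve2 (avec ((j : ℕ) + 1)) (avec ((j : ℕ) + 2)) (Famat F j) (Famat F (j + 1)) = F := by
  rw [← Famat_succ F j, show Famat F j = mvec F (avec ((j : ℕ) + 1)) from rfl,
    show (((j : ℕ) : ℤ) + 2) = ((j : ℕ) + 1) + 1 by ring]
  exact solve2_mvec _ _ F (det_avec_ne _)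

lemma line_hasDerivAt' (V : (Fin 6 → E2) → ℝ) (hV : Differentiable ℝ V)
    (g w : Fin 6 → E2) :
    HasDerivAt (fun t : ℝ => V (g + t • w)) (fderiv ℝ V g w) 0 := by
  have hF : HasFDerivAt V (fderiv ℝ V g) ((fun t : ℝ => g + t • w) 0) := by
    simpa using (hV g).hasFDerivAt
  simpa [Function.comp_def] using hF.comp_hasDerivAt 0 (line_hasDerivAt g w 0)

lemma mvs1 (m : ℤ) (v1 v2 : E2) : mvec (solve2 (avec 1) (avec 2) v1 v2) (avec m)
    = coef (2 - m) • v1 + coef (m - 1) • v2 := by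
  have h := mvec_solve2_avec 1 m v1 v2
  norm_num at h
  exact h

lemma mvs2 (m : ℤ) (v1 v2 : E2) : mvec (solve2 (avec 2) (avec 3) v1 v2) (avec m)
    = coef (3 - m) • v1 + coef (m - 2) • v2 := by
  have h := mvec_solve2_avec 2 m v1 v2
  norm_num at h
  exact h

lemma mvs3 (m : ℤ) (v1 v2 : E2) : mvec (solve2 (avec 3) (avec 4) v1 v2) (avec m)
    = coef (4 - m) • v1 + coef (m - 3) • v2 := by
  have h := mvec_solve2_avec 3 m v1 v2
  norm_num at h
  exact h

lemma mvs4 (m : ℤ) (v1 v2 : E2) : mvec (solve2 (avec 4) (avec 5) v1 v2) (avec m)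
    = coef (5 - m) • v1 + coef (m - 4) • v2 := by
  have h := mvec_solve2_avec 4 m v1 v2
  norm_num at h
  exact h

lemma mvs5 (m : ℤ) (v1 v2 : E2) : mvec (solve2 (avec 5) (avec 6) v1 v2) (avec m)
    = coef (6 - m) • v1 + coef (m - 5) • v2 := by
  have h := mvec_solve2_avec 5 m v1 v2
  norm_num at h
  exact h

lemma mvs6 (m : ℤ) (v1 v2 : E2) : mvec (solve2 (avec 6) (avec 7) v1 v2) (avec m)
    = coef (7 - m) • v1 + coef (m - 6) • v2 := by
  have h := mvec_solve2_avec 6 m v1 v2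
  norm_num at h
  exact h

lemma Famat_add_smul (F M : Mat2) (t : ℝ) :
    Famat (F + t • M) = Famat F + t • Famat M := by
  funext K
  show mvec (F + t • M) (aFam K) = (Famat F + t • Famat M) K
  rw [mvec_matadd]
  rfl

lemma Famat_apply (G : Mat2) (K : Fin 6) : Famat G K = mvec G (avec ((K : ℕ) + 1)) := rfl

set_option maxHeartbeats 3200000 in
lemma pd_Vc (V : (Fin 6 → E2) → ℝ) (hV : memV V) (F : Mat2) (i : Fin 6) :
    pd (Vc V) i (Famat F) = ∑ j : Fin 6, cbC j i • pd V j (Famat F) := by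
  have hVd : Differentiable ℝ V := hV.1.differentiable (by norm_num)
  have hOm : Om0 ≠ 0 := ne_of_gt om0_pos
  ext k
  set w : Fin 6 → Fin 6 → E2 := fun j =>
    Famat (solve2 (avec ((j : ℕ) + 1)) (avec ((j : ℕ) + 2)) (unitv i k j) (unitv i k (j + 1)))
    with hw
  have hfun : (fun t : ℝ => Vc V (Famat F + t • unitv i k))
      = fun t : ℝ => (∑ j : Fin 6, V (Famat F + t • w j)) / 6 := by
    funext t
    unfold Vc Wf
    rw [show (∑ j : Fin 6, V (Famat (solve2 (avec ((j : ℕ) + 1)) (avec ((j : ℕ) + 2))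
          ((Famat F + t • unitv i k) j) ((Famat F + t • unitv i k) (j + 1)))) / Om0)
        = ∑ j : Fin 6, V (Famat F + t • w j) / Om0 from
      Finset.sum_congr rfl fun j _ => by
        rw [Pi.add_apply, Pi.add_apply, Pi.smul_apply, Pi.smul_apply, solve2_add_smul,
          solve2_famat F j, Famat_add_smul, hw]]
    rw [← Finset.sum_div]
    field_simp
  have hsum : HasDerivAt (fun t : ℝ => ∑ j : Fin 6, V (Famat F + t • w j))
      (∑ j : Fin 6, fderiv ℝ V (Famat F) (w j)) 0 :=
    HasDerivAt.fun_sum fun j _ => line_hasDerivAt' V hVd (Famat F) (w j)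
  have hder := (hsum.div_const (6 : ℝ)).deriv
  show deriv (fun t : ℝ => Vc V (Famat F + t • unitv i k)) 0
      = (∑ j : Fin 6, cbC j i • pd V j (Famat F)) k
  rw [hfun, hder,
    Finset.sum_congr rfl fun j (_ : j ∈ Finset.univ) => fderiv_expand V hVd (Famat F) (w j),
    WithLp.ofLp_sum, Finset.sum_apply]
  have s3 : pd V 3 (Famat F) = -pd V 0 (Famat F) := by simpa using pd_symm V hV F 0
  have s4 : pd V 4 (Famat F) = -pd V 1 (Famat F) := by simpa using pd_symm V hV F 1
  have s5 : pd V 5 (Famat F) = -pd V 2 (Famat F) := by simpa using pd_symm V hV F 2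
  simp only [hw]
  fin_cases i <;> fin_cases k <;>
  · beta_reduce
    simp only [Fin.zero_eta, Fin.mk_one, Fin.reduceFinMk]
    simp only [Fin.sum_univ_six, Fin.sum_univ_two, Fin.reduceAdd, Fin.isValue, Famat_apply]
    norm_num [show (((1:Fin 6):ℕ):ℤ) = 1 from rfl, show (((2:Fin 6):ℕ):ℤ) = 2 from rfl,
      show (((3:Fin 6):ℕ):ℤ) = 3 from rfl, show (((4:Fin 6):ℕ):ℤ) = 4 from rfl,
      show (((5:Fin 6):ℕ):ℤ) = 5 from rfl]
    simp only [mvs1, mvs2, mvs3, mvs4, mvs5, mvs6]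
    simp only [unitv, Fin.isValue, Fin.reduceEq, Fin.reduceAdd, reduceIte]
    norm_num
    simp only [smul_zero, add_zero, zero_add, PiLp.add_apply, PiLp.smul_apply, smul_eq_mul,
      toE2]
    norm_num [Pi.single_apply, coef_zero, coef_one, coef_two, coef_three, coef_four,
      coef_five, coef_six, coef_neg_one, coef_neg_two, coef_neg_three, coef_neg_four,
      coef_neg_five, cbC]
    simp only [show (-1 : Fin 6) = 5 from rfl, Fin.reduceSub, Fin.reduceAdd, Fin.isValue, Fin.reduceEq, or_self, or_false, false_or, or_true, true_or, reduceIte]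
    simp only [s3, s4, s5, PiLp.neg_apply]
    ring

end PdVc

section DotE

lemma dotE_zero_right (v : E2) : dotE v 0 = 0 := by
  simp [dotE]

lemma dotE_sub_right (v a b : E2) : dotE v (a - b) = dotE v a - dotE v b := by
  simp only [dotE, PiLp.sub_apply, mul_sub]
  rw [Finset.sum_sub_distrib]

lemma dotE_smul_left (c : ℝ) (v a : E2) : dotE (c • v) a = c * dotE v a := by
  simp only [dotE, PiLp.smul_apply, smul_eq_mul, Finset.mul_sum, mul_assoc]

lemma dotE_add_left (v w a : E2) : dotE (v + w) a = dotE v a + dotE w a := by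
  simp only [dotE, PiLp.add_apply, add_mul]
  rw [Finset.sum_add_distrib]

lemma dotE_zero_left (a : E2) : dotE 0 a = 0 := by
  simp [dotE]

lemma dotE_finsum_left {ι : Type*} (s : Finset ι) (g : ι → E2) (a : E2) :
    dotE (∑ j ∈ s, g j) a = ∑ j ∈ s, dotE (g j) a := by
  induction s using Finset.cons_induction with
  | empty => simp [dotE_zero_left]
  | cons j s hj ih => rw [Finset.sum_cons, Finset.sum_cons, dotE_add_left, ih]

end DotE
end AC
open AC in
/-- the forces of the a/c energy under homogeneous deformations (Lemma 3.2). -/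
theorem force_formula_homogeneous
    (A : Set (ℤ × ℤ)) (C : ℤ × ℤ → Fin 6 → Fin 6 → ℝ)
    (hI : ∀ x ∈ interf A, oneSided (C x) ∧ eCons (C x))
    (hA : ∀ x ∈ A, C x = atomC)
    (hC : ∀ x ∈ contR A, C x = cbC) :
    ∀ V : (Fin 6 → E2) → ℝ, memV V → ∀ F : Mat2, ∀ u : ℤ × ℤ → E2, FinSupp u →
      dEac V C A (yhom F) u = ∑ᶠ x : ℤ × ℤ, dotE (forceSum C V F x) (u x) := by
  intro V hV F u hu
  classical
  -- site formula: at the homogeneous state the gradient of the site potential is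
  -- a C-weighted combination of the gradients of V
  have site : ∀ n : ℤ × ℤ, ∀ i : Fin 6,
      pd (Vac V C A n) i (Dfam (yhom F) n) = ∑ j : Fin 6, C n j i • pd V j (Famat F) := by
    intro n i
    rw [Dfam_yhom]
    by_cases hnA : n ∈ A
    · rw [show Vac V C A n = V by simp [Vac, hnA], hA n hnA]
      exact (sum_atomC V (Famat F) i).symm
    · by_cases hnI : n ∈ interf A
      · rw [show Vac V C A n = Vi V (C n) by simp [Vac, hnA, hnI]]
        exact pd_Vi V hV (C n) (hI n hnI).1 (hI n hnI).2 F i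
      · rw [show Vac V C A n = Vc V by simp [Vac, hnA, hnI], hC n ⟨hnA, hnI⟩]
        exact pd_Vc V hV F i
  set S0 : Finset (ℤ × ℤ) := hu.toFinset with hS0def
  have hS0 : ∀ x : ℤ × ℤ, x ∉ S0 → u x = 0 := by
    intro x hx
    by_contra h
    exact hx (hu.mem_toFinset.mpr h)
  have hS0' : ∀ x : ℤ × ℤ, u x ≠ 0 → x ∈ S0 := fun x h => hu.mem_toFinset.mpr h
  set S : Finset (ℤ × ℤ) :=
    S0 ∪ Finset.univ.biUnion (fun i : Fin 6 => S0.image (fun x => x - ed ((i : ℕ) + 1)))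
    with hSdef
  have hS0S : S0 ⊆ S := Finset.subset_union_left
  have hshift : ∀ (i : Fin 6) (x : ℤ × ℤ), x ∈ S0 → x - ed ((i : ℕ) + 1) ∈ S := by
    intro i x hx
    exact Finset.mem_union_right _
      (Finset.mem_biUnion.mpr ⟨i, Finset.mem_univ i, Finset.mem_image.mpr ⟨x, hx, rfl⟩⟩)
  have hout : ∀ n : ℤ × ℤ, n ∉ S → u n = 0 ∧ ∀ i : Fin 6, u (n + ed ((i : ℕ) + 1)) = 0 := by
    intro n hn
    refine ⟨hS0 n fun h => hn (hS0S h), fun i => ?_⟩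
    by_contra h
    have hmem := hshift i _ (hS0' _ h)
    rw [add_sub_cancel_right] at hmem
    exact hn hmem
  -- expand each site term
  have hterm : ∀ n : ℤ × ℤ,
      (∑ i : Fin 6, dotE (pd (Vac V C A n) i (Dfam (yhom F) n)) (Dfam u n i))
      = ∑ i : Fin 6, ∑ j : Fin 6, C n j i *
          (dotE (pd V j (Famat F)) (u (n + ed ((i : ℕ) + 1))) - dotE (pd V j (Famat F)) (u n)) := by
    intro n
    refine Finset.sum_congr rfl fun i _ => ?_
    rw [site n i, show Dfam u n i = u (n + ed ((i : ℕ) + 1)) - u n from rfl, dotE_finsum_left]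
    refine Finset.sum_congr rfl fun j _ => ?_
    rw [dotE_smul_left, dotE_sub_right]
  -- rewrite both sides as finite sums
  unfold dEac
  rw [finsum_eq_sum_of_support_subset _ (s := S) (by
    intro n hn
    rw [Function.mem_support] at hn
    by_contra hnS
    apply hn
    rw [hterm n]
    refine Finset.sum_eq_zero fun i _ => Finset.sum_eq_zero fun j _ => ?_
    simp [(hout n hnS).2 i, (hout n hnS).1, dotE_zero_right])]
  rw [finsum_eq_sum_of_support_subset _ (s := S0) (by
    intro x hx
    rw [Function.mem_support] at hx
    by_contra h
    exact hx (by rw [hS0 x h, dotE_zero_right]))]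
  rw [Finset.sum_congr rfl fun n _ => hterm n]
  have hforce : ∀ x : ℤ × ℤ, dotE (forceSum C V F x) (u x)
      = ∑ j : Fin 6, ∑ i : Fin 6,
          (C (x - ed ((i : ℕ) + 1)) j i - C x j i) * dotE (pd V j (Famat F)) (u x) := by
    intro x
    unfold forceSum
    rw [dotE_finsum_left]
    refine Finset.sum_congr rfl fun j _ => ?_
    rw [dotE_finsum_left]
    exact Finset.sum_congr rfl fun i _ => dotE_smul_left _ _ _
  rw [Finset.sum_congr rfl fun x _ => hforce x]
  -- the key reindexing identity for fixed (i, j)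
  have key : ∀ i j : Fin 6,
      (∑ n ∈ S, C n j i *
        (dotE (pd V j (Famat F)) (u (n + ed ((i : ℕ) + 1))) - dotE (pd V j (Famat F)) (u n)))
      = ∑ x ∈ S0, (C (x - ed ((i : ℕ) + 1)) j i - C x j i) * dotE (pd V j (Famat F)) (u x) := by
    intro i j
    have h1 : (∑ n ∈ S, C n j i * dotE (pd V j (Famat F)) (u (n + ed ((i : ℕ) + 1))))
        = ∑ x ∈ S0, C (x - ed ((i : ℕ) + 1)) j i * dotE (pd V j (Famat F)) (u x) := by
      have hinj : ∀ a ∈ S, ∀ b ∈ S, a + ed ((i : ℕ) + 1) = b + ed ((i : ℕ) + 1) → a = b := by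
        intro a _ b _ hab
        simpa using hab
      have himg : (∑ x ∈ S.image (fun n => n + ed ((i : ℕ) + 1)),
            C (x - ed ((i : ℕ) + 1)) j i * dotE (pd V j (Famat F)) (u x))
          = ∑ n ∈ S, C n j i * dotE (pd V j (Famat F)) (u (n + ed ((i : ℕ) + 1))) := by
        rw [Finset.sum_image hinj]
        simp only [add_sub_cancel_right]
      rw [← himg]
      refine (Finset.sum_subset ?_ ?_).symm
      · intro x hx
        exact Finset.mem_image.mpr ⟨x - ed ((i : ℕ) + 1), hshift i x hx, by rw [sub_add_cancel]⟩
      · intro x _ hx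
        rw [hS0 x hx, dotE_zero_right, mul_zero]
    have h2 : (∑ n ∈ S, C n j i * dotE (pd V j (Famat F)) (u n))
        = ∑ x ∈ S0, C x j i * dotE (pd V j (Famat F)) (u x) := by
      refine (Finset.sum_subset hS0S ?_).symm
      intro x _ hx
      rw [hS0 x hx, dotE_zero_right, mul_zero]
    calc (∑ n ∈ S, C n j i *
          (dotE (pd V j (Famat F)) (u (n + ed ((i : ℕ) + 1))) - dotE (pd V j (Famat F)) (u n)))
        = (∑ n ∈ S, C n j i * dotE (pd V j (Famat F)) (u (n + ed ((i : ℕ) + 1))))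
            - ∑ n ∈ S, C n j i * dotE (pd V j (Famat F)) (u n) := by
          rw [← Finset.sum_sub_distrib]
          exact Finset.sum_congr rfl fun n _ => by ring
      _ = ∑ x ∈ S0, (C (x - ed ((i : ℕ) + 1)) j i * dotE (pd V j (Famat F)) (u x)
            - C x j i * dotE (pd V j (Famat F)) (u x)) := by
          rw [h1, h2, Finset.sum_sub_distrib]
      _ = ∑ x ∈ S0, (C (x - ed ((i : ℕ) + 1)) j i - C x j i) * dotE (pd V j (Famat F)) (u x) :=
          Finset.sum_congr rfl fun x _ => by ring
  -- assemble by exchanging the order of summation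
  calc (∑ n ∈ S, ∑ i : Fin 6, ∑ j : Fin 6, C n j i *
          (dotE (pd V j (Famat F)) (u (n + ed ((i : ℕ) + 1))) - dotE (pd V j (Famat F)) (u n)))
      = ∑ i : Fin 6, ∑ n ∈ S, ∑ j : Fin 6, C n j i *
          (dotE (pd V j (Famat F)) (u (n + ed ((i : ℕ) + 1))) - dotE (pd V j (Famat F)) (u n)) :=
        Finset.sum_comm
    _ = ∑ i : Fin 6, ∑ j : Fin 6, ∑ n ∈ S, C n j i *
          (dotE (pd V j (Famat F)) (u (n + ed ((i : ℕ) + 1))) - dotE (pd V j (Famat F)) (u n)) :=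
        Finset.sum_congr rfl fun i _ => Finset.sum_comm
    _ = ∑ i : Fin 6, ∑ j : Fin 6, ∑ x ∈ S0,
          (C (x - ed ((i : ℕ) + 1)) j i - C x j i) * dotE (pd V j (Famat F)) (u x) :=
        Finset.sum_congr rfl fun i _ => Finset.sum_congr rfl fun j _ => key i j
    _ = ∑ i : Fin 6, ∑ x ∈ S0, ∑ j : Fin 6,
          (C (x - ed ((i : ℕ) + 1)) j i - C x j i) * dotE (pd V j (Famat F)) (u x) :=
        Finset.sum_congr rfl fun i _ => Finset.sum_comm
    _ = ∑ x ∈ S0, ∑ i : Fin 6, ∑ j : Fin 6,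
          (C (x - ed ((i : ℕ) + 1)) j i - C x j i) * dotE (pd V j (Famat F)) (u x) :=
        Finset.sum_comm
    _ = ∑ x ∈ S0, ∑ j : Fin 6, ∑ i : Fin 6,
          (C (x - ed ((i : ℕ) + 1)) j i - C x j i) * dotE (pd V j (Famat F)) (u x) :=
        Finset.sum_congr rfl fun x _ => Finset.sum_comm
end
end

section
/- Let 𝒜 = {x ∈ ℒ : x₂ < 0}, ℐ = {x ∈ ℒ : x₂ = 0}, and 𝒞 = {x ∈ ℒ : x₂ > 0} (a flat interface). Suppose the parameters (C_{x,j,i}), x ∈ ℐ, satisfy the one-sidedness condition and energy consistency, with reduced parameters C_{x,j}, extended to all of ℒ by C_{x,j} := 1 for x ∈ 𝒜 and C_{x,j} := 2/3 for x ∈ 𝒞. Then the force consistency condition Σ_{i=1}^6 ( C_{x−a_i,j,i} − C_{x−a_i,j+3,i} − C_{x,j,i} + C_{x,j+3,i} ) = 0 for all j ∈ {1,2,3} and all x ∈ ℒ holds if and only if C_{x,1} = C_{x+a_1,4} for all x ∈ ℐ and C_{x,j} = C_{x+a_1,j} for all x ∈ ℐ and all j ∈ {2,3,5,6}. -/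
open Real
open scoped BigOperators Classical ENNReal

noncomputable section

namespace AC

/-! ### Auxiliary lemmas for the flat interface characterisation -/

lemma PTsqrt3 : (0:ℝ) < Real.sqrt 3 / 2 := by positivity

lemma PTemb (n : ℤ × ℤ) : emb n 1 = n.2 * (Real.sqrt 3 / 2) := by
  simp [emb, avec, toE2, PiLp.add_apply, PiLp.smul_apply]
  norm_num [Real.sin_pi_div_three]

lemma PTedA : ed ((((0:Fin 6):ℕ):ℤ) + 1) = ((1:ℤ),(0:ℤ)) := rfl
lemma PTedB : ed ((((1:Fin 6):ℕ):ℤ) + 1) = ((0:ℤ),(1:ℤ)) := rfl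
lemma PTedC : ed ((((2:Fin 6):ℕ):ℤ) + 1) = ((-1:ℤ),(1:ℤ)) := rfl
lemma PTedD : ed ((((3:Fin 6):ℕ):ℤ) + 1) = ((-1:ℤ),(0:ℤ)) := rfl
lemma PTedE : ed ((((4:Fin 6):ℕ):ℤ) + 1) = ((0:ℤ),(-1:ℤ)) := rfl
lemma PTedF : ed ((((5:Fin 6):ℕ):ℤ) + 1) = ((1:ℤ),(-1:ℤ)) := rfl
lemma PTed_one : ed 1 = ((1:ℤ),(0:ℤ)) := rfl
lemma PTj03 : (0:Fin 6) + 3 = 3 := rfl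
lemma PTj13 : (1:Fin 6) + 3 = 4 := rfl
lemma PTj23 : (2:Fin 6) + 3 = 5 := rfl

lemma PTfin6_lt3 (j : Fin 6) (h : (j:ℕ) < 3) : j = 0 ∨ j = 1 ∨ j = 2 := by
  fin_cases j <;> simp_all

lemma PTfunC (Cp : Fin 6 → Fin 6 → ℝ) (hos : oneSided Cp) (hec : eCons Cp) :
    Cp = fun j i => if i = j then Cp j j else if i = j - 1 ∨ i = j + 1 then 1 - Cp j j else 0 := by
  funext j i
  by_cases h1 : i = j
  · simp [h1]
  · by_cases h2 : i = j - 1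
    · subst h2
      rw [(hec j).1]
      have hne : j - 1 ≠ j := by revert j; decide
      simp [hne]
    · by_cases h3 : i = j + 1
      · subst h3
        rw [(hec j).2]
        have hne : j + 1 ≠ j := by revert j; decide
        simp [hne]
      · rw [hos j i h2 h1 h3]
        simp [h1, h2, h3]


end AC
open AC in
/-- characterisation of patch test consistent parameters for the flat
interface `𝒜 = {x₂ < 0}`, `ℐ = {x₂ = 0}`, `𝒞 = {x₂ > 0}` (Proposition 3.4). -/
theorem flat_interface_characterisation
    (C : ℤ × ℤ → Fin 6 → Fin 6 → ℝ)
    (hos : ∀ x : ℤ × ℤ, emb x 1 = 0 → oneSided (C x))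
    (hec : ∀ x : ℤ × ℤ, emb x 1 = 0 → eCons (C x))
    (hA : ∀ x : ℤ × ℤ, emb x 1 < 0 → C x = atomC)
    (hC : ∀ x : ℤ × ℤ, 0 < emb x 1 → C x = cbC) :
    fCons C ↔
      ((∀ x : ℤ × ℤ, emb x 1 = 0 → C x 0 0 = C (x + ed 1) 3 3) ∧
       (∀ x : ℤ × ℤ, emb x 1 = 0 → ∀ j : Fin 6,
          (j : ℕ) = 1 ∨ (j : ℕ) = 2 ∨ (j : ℕ) = 4 ∨ (j : ℕ) = 5 →
          C x j j = C (x + ed 1) j j)) := by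
  classical
  have hs3 : (0:ℝ) < Real.sqrt 3 / 2 := PTsqrt3
  have hA' : ∀ p : ℤ × ℤ, p.2 < 0 → C p = atomC := fun p hp =>
    hA p (by rw [PTemb]; exact mul_neg_of_neg_of_pos (by exact_mod_cast hp : ((p.2:ℤ):ℝ) < 0) hs3)
  have hC' : ∀ p : ℤ × ℤ, 0 < p.2 → C p = cbC := fun p hp =>
    hC p (by rw [PTemb]; exact mul_pos (by exact_mod_cast hp : (0:ℝ) < ((p.2:ℤ):ℝ)) hs3)
  have hz : ∀ p : ℤ × ℤ, p.2 = 0 → emb p 1 = 0 := fun p hp => by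
    rw [PTemb, hp]; norm_num
  have hfun : ∀ p : ℤ × ℤ, p.2 = 0 → C p = fun j i =>
      if i = j then C p j j else if i = j - 1 ∨ i = j + 1 then 1 - C p j j else 0 :=
    fun p hp => PTfunC _ (hos p (hz p hp)) (hec p (hz p hp))
  constructor
  · intro h
    have key1 : ∀ n : ℤ, C (n,0) 0 0 = C (n+1,0) 3 3 := by
      intro n
      have e := h 0 (by decide) (n, 1)
      rw [Fin.sum_univ_six] at e
      simp only [PTedA, PTedB, PTedC, PTedD, PTedE, PTedF, Prod.mk_sub_mk] at e
      norm_num [sub_neg_eq_add] at e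
      rw [hfun (n,0) rfl, hfun (n+1,0) rfl, hC' (n,1) (by norm_num),
        hC' (n-1,1) (by norm_num), hC' (n+1,1) (by norm_num), hC' (n,2) (by norm_num),
        hC' (n-1,2) (by norm_num)] at e
      simp (config := { decide := true }) [cbC, PTj03] at e
      linarith [e]
    have key2 : ∀ n : ℤ, C (n,0) 1 1 = C (n+1,0) 1 1 := by
      intro n
      have e := h 1 (by decide) (n, 1)
      rw [Fin.sum_univ_six] at e
      simp only [PTedA, PTedB, PTedC, PTedD, PTedE, PTedF, Prod.mk_sub_mk] at e
      norm_num [sub_neg_eq_add] at e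
      rw [hfun (n,0) rfl, hfun (n+1,0) rfl, hC' (n,1) (by norm_num),
        hC' (n-1,1) (by norm_num), hC' (n+1,1) (by norm_num), hC' (n,2) (by norm_num),
        hC' (n-1,2) (by norm_num)] at e
      simp (config := { decide := true }) [cbC, PTj13] at e
      linarith [e]
    have key3 : ∀ n : ℤ, C (n,0) 2 2 = C (n+1,0) 2 2 := by
      intro n
      have e := h 2 (by decide) (n, 1)
      rw [Fin.sum_univ_six] at e
      simp only [PTedA, PTedB, PTedC, PTedD, PTedE, PTedF, Prod.mk_sub_mk] at e
      norm_num [sub_neg_eq_add] at e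
      rw [hfun (n,0) rfl, hfun (n+1,0) rfl, hC' (n,1) (by norm_num),
        hC' (n-1,1) (by norm_num), hC' (n+1,1) (by norm_num), hC' (n,2) (by norm_num),
        hC' (n-1,2) (by norm_num)] at e
      simp (config := { decide := true }) [cbC, PTj23] at e
      linarith [e]
    have key4 : ∀ n : ℤ, C (n-1,0) 4 4 = C (n,0) 4 4 := by
      intro n
      have e := h 1 (by decide) (n, -1)
      rw [Fin.sum_univ_six] at e
      simp only [PTedA, PTedB, PTedC, PTedD, PTedE, PTedF, Prod.mk_sub_mk] at e
      norm_num [sub_neg_eq_add] at e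
      rw [hfun (n,0) rfl, hfun (n-1,0) rfl, hA' (n,-1) (by norm_num),
        hA' (n-1,-1) (by norm_num), hA' (n,-2) (by norm_num), hA' (n+1,-2) (by norm_num),
        hA' (n+1,-1) (by norm_num)] at e
      simp (config := { decide := true }) [atomC, PTj13] at e
      linarith [e]
    have key5 : ∀ n : ℤ, C (n-1,0) 5 5 = C (n,0) 5 5 := by
      intro n
      have e := h 2 (by decide) (n, -1)
      rw [Fin.sum_univ_six] at e
      simp only [PTedA, PTedB, PTedC, PTedD, PTedE, PTedF, Prod.mk_sub_mk] at e
      norm_num [sub_neg_eq_add] at e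
      rw [hfun (n,0) rfl, hfun (n-1,0) rfl, hA' (n,-1) (by norm_num),
        hA' (n-1,-1) (by norm_num), hA' (n,-2) (by norm_num), hA' (n+1,-2) (by norm_num),
        hA' (n+1,-1) (by norm_num)] at e
      simp (config := { decide := true }) [atomC, PTj23] at e
      linarith [e]
    have hk0 : ∀ m k : ℤ, emb (m,k) 1 = 0 → k = 0 := by
      intro m k hx
      rw [PTemb] at hx
      have : (k:ℝ) = 0 := (mul_eq_zero.mp hx).resolve_right (ne_of_gt hs3)
      exact_mod_cast this
    constructor
    · rintro ⟨m,k⟩ hx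
      obtain rfl : k = 0 := hk0 m k hx
      simp only [PTed_one, Prod.mk_add_mk, add_zero]
      exact key1 m
    · rintro ⟨m,k⟩ hx j hj
      obtain rfl : k = 0 := hk0 m k hx
      simp only [PTed_one, Prod.mk_add_mk, add_zero]
      rcases hj with hj | hj | hj | hj
      · obtain rfl : j = 1 := Fin.ext (by rw [hj]; rfl)
        exact key2 m
      · obtain rfl : j = 2 := Fin.ext (by rw [hj]; rfl)
        exact key3 m
      · obtain rfl : j = 4 := Fin.ext (by rw [hj]; rfl)
        have e := key4 (m+1)
        norm_num at e
        exact e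
      · obtain rfl : j = 5 := Fin.ext (by rw [hj]; rfl)
        have e := key5 (m+1)
        norm_num at e
        exact e
  · rintro ⟨hc1, hc2⟩
    have k1 : ∀ a b : ℤ, b = a + 1 → C (a,0) 0 0 = C (b,0) 3 3 := by
      intro a b hb; subst hb
      have e := hc1 (a,0) (hz _ rfl)
      simpa [PTed_one, Prod.mk_add_mk] using e
    have k2 : ∀ a b : ℤ, b = a + 1 → C (a,0) 1 1 = C (b,0) 1 1 := by
      intro a b hb; subst hb
      have e := hc2 (a,0) (hz _ rfl) 1 (by norm_num)
      simpa [PTed_one, Prod.mk_add_mk] using e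
    have k3 : ∀ a b : ℤ, b = a + 1 → C (a,0) 2 2 = C (b,0) 2 2 := by
      intro a b hb; subst hb
      have e := hc2 (a,0) (hz _ rfl) 2 (by norm_num)
      simpa [PTed_one, Prod.mk_add_mk] using e
    have k4 : ∀ a b : ℤ, b = a + 1 → C (a,0) 4 4 = C (b,0) 4 4 := by
      intro a b hb; subst hb
      have e := hc2 (a,0) (hz _ rfl) 4 (by decide)
      simpa [PTed_one, Prod.mk_add_mk] using e
    have k5 : ∀ a b : ℤ, b = a + 1 → C (a,0) 5 5 = C (b,0) 5 5 := by
      intro a b hb; subst hb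
      have e := hc2 (a,0) (hz _ rfl) 5 (by decide)
      simpa [PTed_one, Prod.mk_add_mk] using e
    intro j hj x
    obtain ⟨m,k⟩ := x
    obtain hk | hk | hk | hk | hk : k ≤ -2 ∨ k = -1 ∨ k = 0 ∨ k = 1 ∨ 2 ≤ k := by omega
    · rw [Fin.sum_univ_six]
      simp only [PTedA, PTedB, PTedC, PTedD, PTedE, PTedF, Prod.mk_sub_mk]
      rw [hA' (m,k) (by show k < 0; omega),
        hA' (m-1, k-0) (by show k - 0 < 0; omega),
        hA' (m-0, k-1) (by show k - 1 < 0; omega),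
        hA' (m - -1, k-1) (by show k - 1 < 0; omega),
        hA' (m - -1, k-0) (by show k - 0 < 0; omega),
        hA' (m-0, k - -1) (by show k - -1 < 0; omega),
        hA' (m-1, k - -1) (by show k - -1 < 0; omega)]
      ring
    · subst hk
      rcases PTfin6_lt3 j hj with rfl | rfl | rfl
      · rw [Fin.sum_univ_six]
        simp only [PTedA, PTedB, PTedC, PTedD, PTedE, PTedF, Prod.mk_sub_mk]
        norm_num [sub_neg_eq_add]
        rw [hfun (m,0) rfl, hfun (m-1,0) rfl, hA' (m,-1) (by norm_num),
          hA' (m-1,-1) (by norm_num), hA' (m,-2) (by norm_num), hA' (m+1,-2) (by norm_num),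
          hA' (m+1,-1) (by norm_num)]
        simp (config := { decide := true }) [atomC, PTj03]
        linarith [k1 (m-1) m (by ring)]
      · rw [Fin.sum_univ_six]
        simp only [PTedA, PTedB, PTedC, PTedD, PTedE, PTedF, Prod.mk_sub_mk]
        norm_num [sub_neg_eq_add]
        rw [hfun (m,0) rfl, hfun (m-1,0) rfl, hA' (m,-1) (by norm_num),
          hA' (m-1,-1) (by norm_num), hA' (m,-2) (by norm_num), hA' (m+1,-2) (by norm_num),
          hA' (m+1,-1) (by norm_num)]
        simp (config := { decide := true }) [atomC, PTj13]
        linarith [k4 (m-1) m (by ring)]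
      · rw [Fin.sum_univ_six]
        simp only [PTedA, PTedB, PTedC, PTedD, PTedE, PTedF, Prod.mk_sub_mk]
        norm_num [sub_neg_eq_add]
        rw [hfun (m,0) rfl, hfun (m-1,0) rfl, hA' (m,-1) (by norm_num),
          hA' (m-1,-1) (by norm_num), hA' (m,-2) (by norm_num), hA' (m+1,-2) (by norm_num),
          hA' (m+1,-1) (by norm_num)]
        simp (config := { decide := true }) [atomC, PTj23]
        linarith [k5 (m-1) m (by ring)]
    · subst hk
      rcases PTfin6_lt3 j hj with rfl | rfl | rfl
      · rw [Fin.sum_univ_six]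
        simp only [PTedA, PTedB, PTedC, PTedD, PTedE, PTedF, Prod.mk_sub_mk]
        norm_num [sub_neg_eq_add]
        rw [hfun (m,0) rfl, hfun (m-1,0) rfl, hfun (m+1,0) rfl,
          hA' (m,-1) (by norm_num), hA' (m+1,-1) (by norm_num),
          hC' (m,1) (by norm_num), hC' (m-1,1) (by norm_num)]
        simp (config := { decide := true }) [atomC, cbC, PTj03]
        linarith [k1 (m-1) m (by ring), k1 m (m+1) (by ring)]
      · rw [Fin.sum_univ_six]
        simp only [PTedA, PTedB, PTedC, PTedD, PTedE, PTedF, Prod.mk_sub_mk]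
        norm_num [sub_neg_eq_add]
        rw [hfun (m,0) rfl, hfun (m-1,0) rfl, hfun (m+1,0) rfl,
          hA' (m,-1) (by norm_num), hA' (m+1,-1) (by norm_num),
          hC' (m,1) (by norm_num), hC' (m-1,1) (by norm_num)]
        simp (config := { decide := true }) [atomC, cbC, PTj13]
        linarith [k2 (m-1) m (by ring), k4 m (m+1) (by ring)]
      · rw [Fin.sum_univ_six]
        simp only [PTedA, PTedB, PTedC, PTedD, PTedE, PTedF, Prod.mk_sub_mk]
        norm_num [sub_neg_eq_add]
        rw [hfun (m,0) rfl, hfun (m-1,0) rfl, hfun (m+1,0) rfl,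
          hA' (m,-1) (by norm_num), hA' (m+1,-1) (by norm_num),
          hC' (m,1) (by norm_num), hC' (m-1,1) (by norm_num)]
        simp (config := { decide := true }) [atomC, cbC, PTj23]
        linarith [k5 (m-1) m (by ring), k3 m (m+1) (by ring)]
    · subst hk
      rcases PTfin6_lt3 j hj with rfl | rfl | rfl
      · rw [Fin.sum_univ_six]
        simp only [PTedA, PTedB, PTedC, PTedD, PTedE, PTedF, Prod.mk_sub_mk]
        norm_num [sub_neg_eq_add]
        rw [hfun (m,0) rfl, hfun (m+1,0) rfl, hC' (m,1) (by norm_num),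
          hC' (m-1,1) (by norm_num), hC' (m+1,1) (by norm_num), hC' (m,2) (by norm_num),
          hC' (m-1,2) (by norm_num)]
        simp (config := { decide := true }) [cbC, PTj03]
        linarith [k1 m (m+1) (by ring)]
      · rw [Fin.sum_univ_six]
        simp only [PTedA, PTedB, PTedC, PTedD, PTedE, PTedF, Prod.mk_sub_mk]
        norm_num [sub_neg_eq_add]
        rw [hfun (m,0) rfl, hfun (m+1,0) rfl, hC' (m,1) (by norm_num),
          hC' (m-1,1) (by norm_num), hC' (m+1,1) (by norm_num), hC' (m,2) (by norm_num),
          hC' (m-1,2) (by norm_num)]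
        simp (config := { decide := true }) [cbC, PTj13]
        linarith [k2 m (m+1) (by ring)]
      · rw [Fin.sum_univ_six]
        simp only [PTedA, PTedB, PTedC, PTedD, PTedE, PTedF, Prod.mk_sub_mk]
        norm_num [sub_neg_eq_add]
        rw [hfun (m,0) rfl, hfun (m+1,0) rfl, hC' (m,1) (by norm_num),
          hC' (m-1,1) (by norm_num), hC' (m+1,1) (by norm_num), hC' (m,2) (by norm_num),
          hC' (m-1,2) (by norm_num)]
        simp (config := { decide := true }) [cbC, PTj23]
        linarith [k3 m (m+1) (by ring)]
    · rw [Fin.sum_univ_six]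
      simp only [PTedA, PTedB, PTedC, PTedD, PTedE, PTedF, Prod.mk_sub_mk]
      rw [hC' (m,k) (by show 0 < k; omega),
        hC' (m-1, k-0) (by show 0 < k - 0; omega),
        hC' (m-0, k-1) (by show 0 < k - 1; omega),
        hC' (m - -1, k-1) (by show 0 < k - 1; omega),
        hC' (m - -1, k-0) (by show 0 < k - 0; omega),
        hC' (m-0, k - -1) (by show 0 < k - -1; omega),
        hC' (m-1, k - -1) (by show 0 < k - -1; omega)]
      ring
end
end
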